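/- arXiv:2304.00796 — 3 statements merged into one kernel-verified Lean document; each statement's English description precedes it below -/
import Mathlib

section
/- If M is a lattice path matroid and N is a minor of M, then N is a lattice path matroid; that is, the class of lattice path matroids is closed under minors. -/
open Set Matroid

variable {α : Type*}

/-- `N` is a transversal presentation of the matroid `M`: the independent sets of `M` are
exactly the partial transversals of the family `N`, i.e. the subsets of the ground set
admitting an injection `φ` into the index set with `x ∈ N (φ x)` for all `x`. -/
def IsTransversalPresentation (M : Matroid α) {r : ℕ} (N : Fin r → Set α) : Prop :=
  (∀ i, N i ⊆ M.E) ∧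
    ∀ I : Set α, M.Indep I ↔
      I ⊆ M.E ∧ ∃ φ : I → Fin r, Function.Injective φ ∧ ∀ x : I, (x : α) ∈ N (φ x)

/-- A matroid is bicircular if it has a transversal presentation in which every set of the
presentation has at most two elements. -/
def Bicircular (M : Matroid α) : Prop :=
  ∃ (r : ℕ) (N : Fin r → Set α), IsTransversalPresentation M N ∧ ∀ i, (N i).encard ≤ 2

/-- `M` is a matroid on ground set `{1, …, m + r}` with a standard (lattice path)
presentation consisting of the intervals `[l i, u i]`, where the lower endpoints and the
upper endpoints each form strictly increasing chains. -/
def IsStandardPresentation (M : Matroid ℕ) (m : ℕ) {r : ℕ} (l u : Fin r → ℕ) : Prop :=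
  M.E = Set.Icc 1 (m + r) ∧ StrictMono l ∧ StrictMono u ∧
    (∀ i, 1 ≤ l i ∧ l i ≤ u i ∧ u i ≤ m + r) ∧
    IsTransversalPresentation M (fun i => Set.Icc (l i) (u i))

/-- A matroid is a lattice path matroid if it is isomorphic (via a bijection `g` of ground
sets) to a transversal matroid on `{1, …, m + r}` whose presentation consists of intervals
`[l i, u i]` with both endpoint sequences strictly increasing. -/
def LatticePath (M : Matroid α) : Prop :=
  ∃ (r m : ℕ) (g : ℕ → α) (l u : Fin r → ℕ),
    Set.InjOn g (Set.Icc 1 (m + r)) ∧ g '' Set.Icc 1 (m + r) = M.E ∧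
    StrictMono l ∧ StrictMono u ∧ (∀ i, 1 ≤ l i ∧ l i ≤ u i ∧ u i ≤ m + r) ∧
    IsTransversalPresentation M (fun i => g '' Set.Icc (l i) (u i))

/-- The class of matroids that are both bicircular and lattice path. -/
def BicircLP (M : Matroid α) : Prop := Bicircular M ∧ LatticePath M

/-- Deletion of the set `D` from the matroid `M`. -/
def MDel (M : Matroid α) (D : Set α) : Matroid α := M ↾ (M.E \ D)

/-- Contraction of the set `C` in the matroid `M`. -/
def MCon (M : Matroid α) (C : Set α) : Matroid α := (M✶ ↾ (M.E \ C))✶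

/-- `N` is a minor of `M`: it is obtained from `M` by contracting a set and deleting a set. -/
def IsMinorOf (N M : Matroid α) : Prop :=
  ∃ C D : Set α, C ⊆ M.E ∧ D ⊆ M.E ∧ Disjoint C D ∧ N = MDel (MCon M C) D

/-- `N` is a proper minor of `M`: a minor on a proper subset of the ground set. -/
def IsProperMinorOf (N M : Matroid α) : Prop := IsMinorOf N M ∧ N.E ⊂ M.E

/-- `M` is an excluded minor for the class `𝒞`: `M` is not in `𝒞`, but every proper minor
of `M` is in `𝒞`. -/
def IsExcludedMinor (𝒞 : Matroid α → Prop) (M : Matroid α) : Prop :=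
  ¬ 𝒞 M ∧ ∀ N : Matroid α, IsProperMinorOf N M → 𝒞 N

/-- The rank of the set `X` in `M`: the supremum of the cardinalities of independent
subsets of `X`. -/
noncomputable def eRk (M : Matroid α) (X : Set α) : ℕ∞ :=
  ⨆ I : {I : Set α // M.Indep I ∧ I ⊆ X}, (I : Set α).encard

/-- The rank of the matroid `M`. -/
noncomputable def eRank (M : Matroid α) : ℕ∞ := _root_.eRk M M.E

/-- `M` is vertically 3-connected: it has no vertical `k`-separation for `k < 3`, i.e. no
partition `(A, B)` of the ground set with `|A| ≥ k`, `|B| ≥ k`, `r A ≥ k`, `r B ≥ k` and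
`r A + r B - r M < k`. -/
def VerticallyThreeConnected (M : Matroid α) : Prop :=
  ∀ k : ℕ, 0 < k → k < 3 → ∀ A B : Set α, A ∪ B = M.E → Disjoint A B →
    ¬ ((k : ℕ∞) ≤ A.encard ∧ (k : ℕ∞) ≤ B.encard ∧ (k : ℕ∞) ≤ _root_.eRk M A ∧
        (k : ℕ∞) ≤ _root_.eRk M B ∧ _root_.eRk M A + _root_.eRk M B < _root_.eRank M + (k : ℕ∞))

/-- A circuit of a matroid: a minimal dependent set. -/
def IsCircuit (M : Matroid α) (C : Set α) : Prop :=
  M.Dep C ∧ ∀ D : Set α, D ⊂ C → M.Indep D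

/-- `P` is a parallel class of `M`: a maximal set of pairwise parallel non-loop elements. -/
def IsParallelClass (M : Matroid α) (P : Set α) : Prop :=
  P.Nonempty ∧ P ⊆ M.E ∧ (∀ a ∈ P, M.Indep {a}) ∧
    (∀ a ∈ P, ∀ b ∈ P, a ≠ b → ¬ M.Indep {a, b}) ∧
    ∀ c ∈ M.E, M.Indep {c} → (∀ a ∈ P, a ≠ c → ¬ M.Indep {a, c}) → c ∈ P

/-- `M` is isomorphic to the uniform matroid `U_{a,b}`: its ground set has `b` elements and
its independent sets are the subsets of the ground set with at most `a` elements. -/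
def IsUnifIso (a b : ℕ) (M : Matroid α) : Prop :=
  M.E.encard = (b : ℕ∞) ∧ ∀ I : Set α, M.Indep I ↔ I ⊆ M.E ∧ I.encard ≤ (a : ℕ∞)

/-- `M` is the direct sum of `M₁` and `M₂` (which have disjoint ground sets). -/
def IsDirectSumOf (M M₁ M₂ : Matroid α) : Prop :=
  Disjoint M₁.E M₂.E ∧ M.E = M₁.E ∪ M₂.E ∧
    ∀ I : Set α, M.Indep I ↔ I ⊆ M.E ∧ M₁.Indep (I ∩ M₁.E) ∧ M₂.Indep (I ∩ M₂.E)

/-- `M` is the truncation `T_n(M₀)` to rank `n` of the matroid `M₀` (of rank at least `n`):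
its independent sets are the independent sets of `M₀` with at most `n` elements. -/
def IsTruncationOf (n : ℕ) (M₀ M : Matroid α) : Prop :=
  (n : ℕ∞) ≤ _root_.eRank M₀ ∧ M.E = M₀.E ∧
    ∀ I : Set α, M.Indep I ↔ M₀.Indep I ∧ I.encard ≤ (n : ℕ∞)

/-- `M` is the free extension `M₀ + x` of `M₀` by the new element `x`: its independent sets
are the independent sets `I` of `M₀`, together with the sets `I ∪ {x}` for `I` independent
in `M₀` with `|I| ≤ r(M₀) - 1`. -/
def IsFreeExtOf (M₀ M : Matroid α) (x : α) : Prop :=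
  x ∉ M₀.E ∧ M.E = insert x M₀.E ∧
    ∀ I : Set α, M.Indep I ↔
      ((x ∉ I ∧ M₀.Indep I) ∨
        (x ∈ I ∧ M₀.Indep (I \ {x}) ∧ (I \ {x}).encard + 1 ≤ _root_.eRank M₀))

/-- `M` is isomorphic to `T_3(U_{1,2} ⊕ U_{3,5})`. -/
def IsT3U12U35 (M : Matroid α) : Prop :=
  ∃ M₁ M₂ M₀ : Matroid α, IsUnifIso 1 2 M₁ ∧ IsUnifIso 3 5 M₂ ∧ IsDirectSumOf M₀ M₁ M₂ ∧
    IsTruncationOf 3 M₀ M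

/-- `M` is isomorphic to `T_3(U_{1,2} ⊕ U_{1,2} ⊕ U_{3,3})`. -/
def IsT3U12U12U33 (M : Matroid α) : Prop :=
  ∃ M₁ M₂ M₃ M₁₂ M₀ : Matroid α, IsUnifIso 1 2 M₁ ∧ IsUnifIso 1 2 M₂ ∧ IsUnifIso 3 3 M₃ ∧
    IsDirectSumOf M₁₂ M₁ M₂ ∧ IsDirectSumOf M₀ M₁₂ M₃ ∧ IsTruncationOf 3 M₀ M

/-- `M` is isomorphic to `T_4(U_{1,2} ⊕ U_{4,5})`. -/
def IsT4U12U45 (M : Matroid α) : Prop :=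
  ∃ M₁ M₂ M₀ : Matroid α, IsUnifIso 1 2 M₁ ∧ IsUnifIso 4 5 M₂ ∧ IsDirectSumOf M₀ M₁ M₂ ∧
    IsTruncationOf 4 M₀ M

/-- `M` is isomorphic to `T_4(U_{3,4} ⊕ U_{3,3})`. -/
def IsT4U34U33 (M : Matroid α) : Prop :=
  ∃ M₁ M₂ M₀ : Matroid α, IsUnifIso 3 4 M₁ ∧ IsUnifIso 3 3 M₂ ∧ IsDirectSumOf M₀ M₁ M₂ ∧
    IsTruncationOf 4 M₀ M

/-- `M` is isomorphic to `P_n = T_n(U_{n-1,n} ⊕ U_{n-1,n})`. -/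
def IsP (n : ℕ) (M : Matroid α) : Prop :=
  ∃ M₁ M₂ M₀ : Matroid α, IsUnifIso (n - 1) n M₁ ∧ IsUnifIso (n - 1) n M₂ ∧
    IsDirectSumOf M₀ M₁ M₂ ∧ IsTruncationOf n M₀ M

/-- `M` is isomorphic to `P_n' = (P_{n-1}✶ + e)✶`, the free coextension of `P_{n-1}`. -/
def IsP' (n : ℕ) (M : Matroid α) : Prop :=
  ∃ (N : Matroid α) (e : α), IsP (n - 1) N ∧ IsFreeExtOf N✶ M✶ e

/-- `M` is isomorphic to `A_n = P_n' + x`. -/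
def IsA (n : ℕ) (M : Matroid α) : Prop :=
  ∃ (N : Matroid α) (x : α), IsP' n N ∧ IsFreeExtOf N M x

/-- `M` is isomorphic to `B_{n,k} = T_n(U_{n-1,n} ⊕ U_{n-1,n} ⊕ U_{k-1,k})`. -/
def IsB (n k : ℕ) (M : Matroid α) : Prop :=
  ∃ M₁ M₂ M₃ M₁₂ M₀ : Matroid α, IsUnifIso (n - 1) n M₁ ∧ IsUnifIso (n - 1) n M₂ ∧
    IsUnifIso (k - 1) k M₃ ∧ IsDirectSumOf M₁₂ M₁ M₂ ∧ IsDirectSumOf M₀ M₁₂ M₃ ∧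
    IsTruncationOf n M₀ M

/-- `M` is isomorphic to `C_{n+k,k} = B_{n,k}✶`. -/
def IsC (n k : ℕ) (M : Matroid α) : Prop := IsB n k M✶

/-- `M` is isomorphic to `D_n = (P_{n-1} ⊕ U_{1,1}) + x`. -/
def IsD (n : ℕ) (M : Matroid α) : Prop :=
  ∃ (P U S : Matroid α) (x : α), IsP (n - 1) P ∧ IsUnifIso 1 1 U ∧ IsDirectSumOf S P U ∧
    IsFreeExtOf S M x

/-- `M` is isomorphic to `E_n = D_n✶`. -/
def IsE (n : ℕ) (M : Matroid α) : Prop := IsD n M✶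

/-- `M` is isomorphic to the rank-3 whirl `𝒲³`, the transversal matroid on `{1, …, 6}` with
presentation `({1,3,4}, {1,2,5}, {2,3,6})`. -/
def IsWhirl3 (M : Matroid α) : Prop :=
  ∃ g : ℕ → α, Set.InjOn g (Set.Icc 1 6) ∧ g '' Set.Icc 1 6 = M.E ∧
    IsTransversalPresentation M ![g '' {1, 3, 4}, g '' {1, 2, 5}, g '' {2, 3, 6}]

/-- `M` is isomorphic to `R₃`, the transversal matroid on `{1, …, 7}` with presentation
`({1,2}, {1,3,4,5}, {2,3,6,7})`. -/
def IsR3 (M : Matroid α) : Prop :=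
  ∃ g : ℕ → α, Set.InjOn g (Set.Icc 1 7) ∧ g '' Set.Icc 1 7 = M.E ∧
    IsTransversalPresentation M ![g '' {1, 2}, g '' {1, 3, 4, 5}, g '' {2, 3, 6, 7}]

/-- `M` is isomorphic to `R₄`, the transversal matroid on `{1, …, 7}` with presentation
`({1,2}, {1,3,4,5}, {2,3,6,7}, {6,7})`. -/
def IsR4 (M : Matroid α) : Prop :=
  ∃ g : ℕ → α, Set.InjOn g (Set.Icc 1 7) ∧ g '' Set.Icc 1 7 = M.E ∧
    IsTransversalPresentation M
      ![g '' {1, 2}, g '' {1, 3, 4, 5}, g '' {2, 3, 6, 7}, g '' {6, 7}]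

/-- `M` is isomorphic to the rank-3 wheel `𝒲₃`, the cycle matroid of `K₄`: the elements
correspond bijectively to the edges of the complete graph on four vertices, and a set is
independent if and only if the corresponding edge set is acyclic. -/
def IsWheel3 (M : Matroid α) : Prop :=
  ∃ f : α → Sym2 (Fin 4),
    Set.InjOn f M.E ∧ (∀ x ∈ M.E, ¬ (f x).IsDiag) ∧
    (∀ p : Sym2 (Fin 4), ¬ p.IsDiag → ∃ x ∈ M.E, f x = p) ∧
    ∀ I : Set α, M.Indep I ↔ I ⊆ M.E ∧ (SimpleGraph.fromEdgeSet (f '' I)).IsAcyclic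


namespace LPAux

/-- matching of a finite set into the interval family `[l i, u i]`, `i < r`. -/
def Mch (r : ℕ) (l u : ℕ → ℕ) (T : Finset ℕ) : Prop :=
  ∃ φ : ℕ → ℕ, Set.InjOn φ T ∧ ∀ x ∈ T, φ x < r ∧ l (φ x) ≤ x ∧ x ≤ u (φ x)

def Mon (r : ℕ) (f : ℕ → ℕ) : Prop := ∀ ⦃i j : ℕ⦄, i ≤ j → j < r → f i ≤ f j

def SMon (r : ℕ) (f : ℕ → ℕ) : Prop := ∀ ⦃i j : ℕ⦄, i < j → j < r → f i < f j

lemma SMon.mon {r f} (h : SMon r f) : Mon r f := by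
  intro i j hij hj
  rcases eq_or_lt_of_le hij with rfl | h'
  · exact le_rfl
  · exact (h h' hj).le

lemma SMon.add_le {r : ℕ} {f : ℕ → ℕ} (h : SMon r f) :
    ∀ {i j : ℕ}, i ≤ j → j < r → f i + (j - i) ≤ f j := by
  have key : ∀ d i, i + d < r → f i + d ≤ f (i + d) := by
    intro d
    induction d with
    | zero => intro i _; simp
    | succ d ih =>
      intro i hi
      have h1 : f i + d ≤ f (i + d) := ih i (by omega)
      have h2 : f (i + d) < f (i + (d + 1)) := h (by omega) (by omega)
      omega
  intro i j hij hj
  have := key (j - i) i (by omega)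
  have hji : i + (j - i) = j := by omega
  rw [hji] at this
  exact this

lemma SMon.injOn {r f} (h : SMon r f) {i j : ℕ} (hi : i < r) (hj : j < r)
    (hij : f i = f j) : i = j := by
  rcases lt_trichotomy i j with h' | h' | h'
  · exact absurd hij (by have := h h' hj; omega)
  · exact h'
  · exact absurd hij (by have := h h' hi; omega)

/-- counting criterion, with index floor `k`. -/
def crit (k r : ℕ) (l u : ℕ → ℕ) (T : Finset ℕ) : Prop :=
  ∀ a b : ℕ, (T.filter fun x => a ≤ x ∧ x ≤ b).card ≤
    ((Finset.range r).filter fun i => k ≤ i ∧ l i ≤ b ∧ a ≤ u i).card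

lemma Mch.crit {r l u T} (h : Mch r l u T) : crit 0 r l u T := by
  obtain ⟨φ, hinj, hφ⟩ := h
  intro a b
  apply Finset.card_le_card_of_injOn φ
  · intro x hx
    simp only [Finset.mem_coe, Finset.mem_filter] at hx ⊢
    obtain ⟨hxT, hax, hxb⟩ := hx
    obtain ⟨h1, h2, h3⟩ := hφ x hxT
    exact ⟨Finset.mem_range.2 h1, Nat.zero_le _, le_trans h2 hxb, le_trans hax h3⟩
  · exact hinj.mono (by intro x hx; exact (Finset.mem_filter.1 hx).1)

/-- criterion implies existence of an increasing matching respecting the floor. -/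
lemma crit_to_inc {r : ℕ} {l u : ℕ → ℕ} (hl : Mon r l) (hu : Mon r u) :
    ∀ (n : ℕ) (T : Finset ℕ), T.card = n → ∀ k, crit k r l u T →
    ∃ φ : ℕ → ℕ, (∀ x ∈ T, k ≤ φ x ∧ φ x < r ∧ l (φ x) ≤ x ∧ x ≤ u (φ x)) ∧
      (∀ x ∈ T, ∀ y ∈ T, x < y → φ x < φ y) := by
  intro n
  induction n with
  | zero =>
    intro T hT k _
    rw [Finset.card_eq_zero] at hT
    subst hT
    exact ⟨fun _ => 0, by simp, by simp⟩
  | succ n ih =>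
    intro T hT k hcrit
    have hne : T.Nonempty := by
      rw [← Finset.card_pos, hT]; omega
    set x0 := T.min' hne with hx0def
    have hx0T : x0 ∈ T := T.min'_mem hne
    have hx0min : ∀ x ∈ T, x0 ≤ x := fun x hx => T.min'_le x hx
    set J := (Finset.range r).filter (fun i => k ≤ i ∧ l i ≤ x0 ∧ x0 ≤ u i) with hJdef
    have hJne : J.Nonempty := by
      have h1 := hcrit x0 x0
      have h2 : x0 ∈ T.filter fun x => x0 ≤ x ∧ x ≤ x0 := by
        simp [hx0T]
      have : 0 < J.card := lt_of_lt_of_le (Finset.card_pos.2 ⟨x0, h2⟩) h1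
      exact Finset.card_pos.1 this
    set i0 := J.min' hJne with hi0def
    have hi0J : i0 ∈ J := J.min'_mem hJne
    have hi0 : i0 < r ∧ k ≤ i0 ∧ l i0 ≤ x0 ∧ x0 ≤ u i0 := by
      have := hi0J
      simp only [hJdef, Finset.mem_filter, Finset.mem_range] at this
      tauto
    have F1 : ∀ i, k ≤ i → i < i0 → u i < x0 := by
      intro i hki hii0
      by_contra h
      push_neg at h
      have hir : i < r := lt_trans hii0 hi0.1
      have hli : l i ≤ x0 := le_trans (hl (le_of_lt hii0) hi0.1) hi0.2.2.1
      have : i ∈ J := by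
        simp only [hJdef, Finset.mem_filter, Finset.mem_range]
        exact ⟨hir, hki, hli, h⟩
      have := J.min'_le i this
      omega
    set T' := T.erase x0 with hT'def
    have hT'card : T'.card = n := by
      rw [hT'def, Finset.card_erase_of_mem hx0T, hT]
      omega
    have hT'mem : ∀ x ∈ T', x ∈ T ∧ x0 < x := by
      intro x hx
      rw [hT'def, Finset.mem_erase] at hx
      have := hx0min x hx.2
      exact ⟨hx.2, by omega⟩
    -- the key counting step, for windows above x0
    have main : ∀ a b : ℕ, x0 < a → (T'.filter fun x => a ≤ x ∧ x ≤ b).card ≤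
        ((Finset.range r).filter fun i => i0 + 1 ≤ i ∧ l i ≤ b ∧ a ≤ u i).card := by
      intro a b ha
      by_contra hcon
      push_neg at hcon
      set R' := (Finset.range r).filter fun i => i0 + 1 ≤ i ∧ l i ≤ b ∧ a ≤ u i with hR'def
      set X := T.filter fun x => a ≤ x ∧ x ≤ b with hXdef
      have hXeq : T'.filter (fun x => a ≤ x ∧ x ≤ b) = X := by
        rw [hXdef, hT'def]
        ext x
        simp only [Finset.mem_filter, Finset.mem_erase]
        constructor
        · rintro ⟨⟨hne, hxT⟩, h2⟩; exact ⟨hxT, h2⟩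
        · rintro ⟨hxT, h2⟩; exact ⟨⟨by omega, hxT⟩, h2⟩
      rw [hXeq] at hcon
      have hab' : a ≤ b := by
        have hXpos : 0 < X.card := by omega
        obtain ⟨x, hx⟩ := Finset.card_pos.1 hXpos
        simp only [hXdef, Finset.mem_filter] at hx
        omega
      set R0 := (Finset.range r).filter fun i => k ≤ i ∧ l i ≤ b ∧ a ≤ u i with hR0def
      have h0 : X.card ≤ R0.card := hcrit a b
      have hsub0 : R0 ⊆ insert i0 R' := by
        intro i hi
        simp only [hR0def, Finset.mem_filter, Finset.mem_range] at hi
        obtain ⟨hir, hki, hlib, hau⟩ := hi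
        rcases lt_trichotomy i i0 with h' | h' | h'
        · exact absurd (F1 i hki h') (by omega)
        · subst h'; exact Finset.mem_insert_self _ _
        · apply Finset.mem_insert_of_mem
          simp only [hR'def, Finset.mem_filter, Finset.mem_range]
          exact ⟨hir, by omega, hlib, hau⟩
      have hcard0 : R0.card ≤ R'.card + 1 :=
        le_trans (Finset.card_le_card hsub0) (Finset.card_insert_le _ _)
      have hi0R0 : i0 ∈ R0 := by
        by_contra hnot
        have : R0 ⊆ R' := by
          intro i hi
          rcases Finset.mem_insert.1 (hsub0 hi) with rfl | h'
          · exact absurd hi hnot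
          · exact h'
        have := Finset.card_le_card this
        omega
      have hi0b : l i0 ≤ b ∧ a ≤ u i0 := by
        have := hi0R0
        simp only [hR0def, Finset.mem_filter, Finset.mem_range] at this
        tauto
      -- second window [x0, b]
      have h2 := hcrit x0 b
      set R1 := (Finset.range r).filter fun i => k ≤ i ∧ l i ≤ b ∧ x0 ≤ u i with hR1def
      have hlhs2 : X.card + 1 ≤ (T.filter fun x => x0 ≤ x ∧ x ≤ b).card := by
        have hsub : insert x0 X ⊆ T.filter fun x => x0 ≤ x ∧ x ≤ b := by
          intro x hx
          rcases Finset.mem_insert.1 hx with rfl | hx'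
          · simp only [Finset.mem_filter]
            exact ⟨hx0T, le_refl _, by omega⟩
          · simp only [hXdef, Finset.mem_filter] at hx'
            simp only [Finset.mem_filter]
            exact ⟨hx'.1, by omega, hx'.2.2⟩
        have hnotmem : x0 ∉ X := by
          simp only [hXdef, Finset.mem_filter]
          push_neg
          intro _ h; omega
        calc X.card + 1 = (insert x0 X).card := (Finset.card_insert_of_notMem hnotmem).symm
          _ ≤ _ := Finset.card_le_card hsub
      have hsub1 : R1 ⊆ insert i0 R' := by
        intro i hi
        simp only [hR1def, Finset.mem_filter, Finset.mem_range] at hi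
        obtain ⟨hir, hki, hlib, hx0u⟩ := hi
        rcases lt_trichotomy i i0 with h' | h' | h'
        · exact absurd (F1 i hki h') (by omega)
        · subst h'; exact Finset.mem_insert_self _ _
        · apply Finset.mem_insert_of_mem
          simp only [hR'def, Finset.mem_filter, Finset.mem_range]
          refine ⟨hir, by omega, hlib, ?_⟩
          exact le_trans hi0b.2 (hu (le_of_lt h') hir)
      have hcard1 : R1.card ≤ R'.card + 1 :=
        le_trans (Finset.card_le_card hsub1) (Finset.card_insert_le _ _)
      omega
    have hcrit' : crit (i0 + 1) r l u T' := by
      intro a b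
      by_cases hab : x0 < a
      · exact main a b hab
      · push_neg at hab
        have heq : T'.filter (fun x => a ≤ x ∧ x ≤ b) =
            T'.filter (fun x => x0 + 1 ≤ x ∧ x ≤ b) := by
          apply Finset.filter_congr
          intro x hx
          have := (hT'mem x hx).2
          omega
        rw [heq]
        refine le_trans (main (x0+1) b (by omega)) (Finset.card_le_card ?_)
        intro i hi
        simp only [Finset.mem_filter, Finset.mem_range] at hi ⊢
        exact ⟨hi.1, hi.2.1, hi.2.2.1, by omega⟩
    obtain ⟨φ', hφ'1, hφ'2⟩ := ih T' hT'card (i0 + 1) hcrit'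
    refine ⟨Function.update φ' x0 i0, ?_, ?_⟩
    · intro x hx
      by_cases hxx : x = x0
      · subst hxx
        rw [Function.update_self]
        exact ⟨hi0.2.1, hi0.1, hi0.2.2.1, hi0.2.2.2⟩
      · have hxT' : x ∈ T' := Finset.mem_erase.2 ⟨hxx, hx⟩
        rw [Function.update_of_ne hxx]
        have := hφ'1 x hxT'
        exact ⟨by omega, this.2.1, this.2.2.1, this.2.2.2⟩
    · intro x hx y hy hxy
      by_cases hxx : x = x0
      · subst hxx
        have hyy : y ≠ x0 := by omega
        rw [Function.update_self, Function.update_of_ne hyy]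
        have hyT' : y ∈ T' := Finset.mem_erase.2 ⟨hyy, hy⟩
        have := hφ'1 y hyT'
        omega
      · have hyy : y ≠ x0 := by
          intro h; subst h
          have := hx0min x hx
          omega
        rw [Function.update_of_ne hxx, Function.update_of_ne hyy]
        exact hφ'2 x (Finset.mem_erase.2 ⟨hxx, hx⟩) y (Finset.mem_erase.2 ⟨hyy, hy⟩) hxy

lemma inc_to_Mch {r : ℕ} {l u : ℕ → ℕ} {T : Finset ℕ} {φ : ℕ → ℕ}
    (h1 : ∀ x ∈ T, φ x < r ∧ l (φ x) ≤ x ∧ x ≤ u (φ x))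
    (h2 : ∀ x ∈ T, ∀ y ∈ T, x < y → φ x < φ y) : Mch r l u T := by
  refine ⟨φ, ?_, h1⟩
  intro x hx y hy hxy
  rcases lt_trichotomy x y with h' | h' | h'
  · have := h2 x hx y hy h'; omega
  · exact h'
  · have := h2 y hy x hx h'; omega

lemma crit_to_Mch {r : ℕ} {l u : ℕ → ℕ} {T : Finset ℕ} (hl : Mon r l) (hu : Mon r u)
    (h : crit 0 r l u T) : Mch r l u T := by
  obtain ⟨φ, h1, h2⟩ := crit_to_inc hl hu T.card T rfl 0 h
  exact inc_to_Mch (fun x hx => ⟨(h1 x hx).2.1, (h1 x hx).2.2.1, (h1 x hx).2.2.2⟩) h2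


def lst (l : ℕ → ℕ) (i : ℕ) : ℕ :=
  ((Finset.range (i+1)).image fun p => l p + (i - p)).max'
    (Finset.Nonempty.image ⟨0, Finset.mem_range.2 (Nat.succ_pos i)⟩ _)

lemma lst_ge (l : ℕ → ℕ) {p i : ℕ} (h : p ≤ i) : l p + (i - p) ≤ lst l i := by
  apply Finset.le_max'
  apply Finset.mem_image.2
  exact ⟨p, Finset.mem_range.2 (by omega), rfl⟩

lemma lst_ex (l : ℕ → ℕ) (i : ℕ) : ∃ p, p ≤ i ∧ lst l i = l p + (i - p) := by
  have := Finset.max'_mem _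
    (Finset.Nonempty.image (⟨0, Finset.mem_range.2 (Nat.succ_pos i)⟩ : (Finset.range (i+1)).Nonempty)
      (fun p => l p + (i - p)))
  rw [Finset.mem_image] at this
  obtain ⟨p, hp, he⟩ := this
  exact ⟨p, by have := Finset.mem_range.1 hp; omega, he.symm⟩

def ust (r : ℕ) (u : ℕ → ℕ) (i : ℕ) : ℕ :=
  if h : i < r then
    ((Finset.Icc i (r-1)).image fun q => u q - (q - i)).min'
      (Finset.Nonempty.image ⟨i, Finset.mem_Icc.2 ⟨le_rfl, by omega⟩⟩ _)
  else 0

lemma ust_le {r : ℕ} (u : ℕ → ℕ) {i q : ℕ} (h1 : i ≤ q) (h2 : q < r) :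
    ust r u i ≤ u q - (q - i) := by
  have hi : i < r := by omega
  rw [ust, dif_pos hi]
  exact Finset.min'_le _ _ (Finset.mem_image.2 ⟨q, Finset.mem_Icc.2 ⟨h1, by omega⟩, rfl⟩)

lemma ust_ex {r : ℕ} (u : ℕ → ℕ) {i : ℕ} (hi : i < r) :
    ∃ q, i ≤ q ∧ q < r ∧ ust r u i = u q - (q - i) := by
  rw [ust, dif_pos hi]
  have := Finset.min'_mem _
    (Finset.Nonempty.image (⟨i, Finset.mem_Icc.2 ⟨le_rfl, by omega⟩⟩ :
      (Finset.Icc i (r-1)).Nonempty) (fun q => u q - (q - i)))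
  rw [Finset.mem_image] at this
  obtain ⟨q, hq, he⟩ := this
  rw [Finset.mem_Icc] at hq
  exact ⟨q, hq.1, by omega, he.symm⟩

section Normalize

variable {r : ℕ} {l u : ℕ → ℕ}

theorem lst_smon (hl : Mon r l) : SMon r (lst l) := by
  intro i j hij hj
  obtain ⟨p, hp, he⟩ := lst_ex l i
  have := lst_ge l (show p ≤ j by omega)
  omega

theorem ust_smon (hl1 : ∀ i < r, 1 ≤ l i)
    (hall : ∀ ⦃i j⦄, i ≤ j → j < r → l i + (j - i) ≤ u j) : SMon r (ust r u) := by
  intro i j hij hj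
  obtain ⟨q, hq1, hq2, he⟩ := ust_ex u hj
  have h1 : ust r u i ≤ u q - (q - i) := ust_le u (by omega) hq2
  have h2 : l i + (q - i) ≤ u q := hall (by omega) hq2
  have h3 : 1 ≤ l i := hl1 i (by omega)
  omega

theorem lst_le_ust (hl1 : ∀ i < r, 1 ≤ l i)
    (hall : ∀ ⦃i j⦄, i ≤ j → j < r → l i + (j - i) ≤ u j) {i : ℕ} (hi : i < r) :
    lst l i ≤ ust r u i := by
  obtain ⟨p, hp, hep⟩ := lst_ex l i
  obtain ⟨q, hq1, hq2, heq⟩ := ust_ex u hi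
  have := hall (show p ≤ q by omega) hq2
  omega

theorem le_lst (i : ℕ) : l i ≤ lst l i := by
  have := lst_ge l (le_refl i)
  omega

theorem ust_le_self {i : ℕ} (hi : i < r) : ust r u i ≤ u i := by
  have := ust_le u (le_refl i) hi
  omega

/- covering card bound -/
lemma card_le_two {X A B : Finset ℕ} (h : X ⊆ A ∪ B) : X.card ≤ A.card + B.card :=
  le_trans (Finset.card_le_card h) (Finset.card_union_le _ _)

lemma card_le_three {X A B C : Finset ℕ} (h : X ⊆ A ∪ B ∪ C) :
    X.card ≤ A.card + B.card + C.card :=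
  le_trans (Finset.card_le_card h)
    (le_trans (Finset.card_union_le _ _) (by have := Finset.card_union_le A B; omega))

theorem mch_normalize (hl : Mon r l) (hu : Mon r u) (hl1 : ∀ i < r, 1 ≤ l i)
    (hall : ∀ ⦃i j⦄, i ≤ j → j < r → l i + (j - i) ≤ u j)
    (T : Finset ℕ) (h : Mch r l u T) : Mch r (lst l) (ust r u) T := by
  obtain ⟨φ, hinj, hφ⟩ := h
  apply crit_to_Mch (lst_smon hl).mon (ust_smon hl1 hall).mon
  intro a b
  set X := T.filter (fun x => a ≤ x ∧ x ≤ b) with hXdef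
  set S := (Finset.range r).filter (fun i => 0 ≤ i ∧ lst l i ≤ b ∧ a ≤ ust r u i) with hSdef
  show X.card ≤ S.card
  by_cases hab : a ≤ b
  case neg =>
    have : X = ∅ := by
      apply Finset.filter_false_of_mem
      intro x _
      omega
    simp [this]
  -- general bounds
  have hXsub : ∀ x ∈ X, x ∈ T ∧ a ≤ x ∧ x ≤ b := by
    intro x hx
    simp only [hXdef, Finset.mem_filter] at hx
    tauto
  have subhi : ∀ p p0 : ℕ, p ≤ p0 → p0 < r → b + 1 ≤ l p + (p0 - p) →
      (X.filter fun x => p ≤ φ x).card ≤ p0 - p := by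
    intro p p0 h1 h2 h3
    have hsub : X.filter (fun x => p ≤ φ x) ⊆ Finset.Icc (l p) b := by
      intro x hx
      simp only [Finset.mem_filter] at hx
      obtain ⟨hxX, hpφ⟩ := hx
      obtain ⟨hxT, hax, hxb⟩ := hXsub x hxX
      obtain ⟨hφr, hφl, hφu⟩ := hφ x hxT
      have : l p ≤ l (φ x) := hl hpφ hφr
      exact Finset.mem_Icc.2 ⟨by omega, hxb⟩
    have := Finset.card_le_card hsub
    rw [Nat.card_Icc] at this
    omega
  have sublo : ∀ q q0 : ℕ, q0 ≤ q → q < r → u q - (q - q0) + 1 ≤ a →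
      (X.filter fun x => φ x ≤ q).card ≤ q - q0 := by
    intro q q0 h1 h2 h3
    have hsub : X.filter (fun x => φ x ≤ q) ⊆ Finset.Icc a (u q) := by
      intro x hx
      simp only [Finset.mem_filter] at hx
      obtain ⟨hxX, hφq⟩ := hx
      obtain ⟨hxT, hax, hxb⟩ := hXsub x hxX
      obtain ⟨hφr, hφl, hφu⟩ := hφ x hxT
      have : u (φ x) ≤ u q := hu hφq h2
      exact Finset.mem_Icc.2 ⟨hax, by omega⟩
    have := Finset.card_le_card hsub
    rw [Nat.card_Icc] at this
    omega
  have hinjX : Set.InjOn φ (X.filter fun x => True) := by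
    apply hinj.mono
    intro x hx
    simp only [Finset.coe_filter, Set.mem_setOf_eq] at hx
    exact (hXsub x hx.1).1
  have submid : ∀ P2 : ℕ → Prop, ∀ (Y : Finset ℕ), (∀ x ∈ Y, x ∈ X) →
      ∀ (Z : Finset ℕ), (∀ x ∈ Y, φ x ∈ Z) → Y.card ≤ Z.card := by
    intro _ Y hY Z hZ
    apply Finset.card_le_card_of_injOn φ hZ
    apply hinj.mono
    intro x hx
    exact (hXsub x (hY x hx)).1
  -- the P / Q sets
  set P := (Finset.range r).filter (fun i => b < lst l i) with hPdef
  set Q := (Finset.range r).filter (fun i => ust r u i < a) with hQdef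
  have hdisj : Disjoint P Q := by
    rw [Finset.disjoint_left]
    intro i hiP hiQ
    simp only [hPdef, Finset.mem_filter, Finset.mem_range] at hiP
    simp only [hQdef, Finset.mem_filter, Finset.mem_range] at hiQ
    have := lst_le_ust hl1 hall hiP.1 (u := u)
    omega
  have hSeq : S = (Finset.range r) \ (P ∪ Q) := by
    ext i
    simp only [hSdef, hPdef, hQdef, Finset.mem_filter, Finset.mem_sdiff, Finset.mem_union,
      Finset.mem_range]
    omega
  have hScard : S.card = r - P.card - Q.card := by
    rw [hSeq, Finset.card_sdiff_of_subset (by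
      intro i hi
      rcases Finset.mem_union.1 hi with h | h
      · exact Finset.mem_of_mem_filter _ h
      · exact Finset.mem_of_mem_filter _ h),
      Finset.card_union_of_disjoint hdisj, Finset.card_range]
    omega
  by_cases hP : P.Nonempty
  · set p0 := P.min' hP with hp0def
    have hp0 : p0 < r ∧ b < lst l p0 := by
      have := P.min'_mem hP
      simp only [hPdef, Finset.mem_filter, Finset.mem_range] at this
      exact this
    obtain ⟨p, hpp0, hep⟩ := lst_ex l p0
    have hpb : b + 1 ≤ l p + (p0 - p) := by omega
    have hPcard : P.card = r - p0 := by
      have : P = Finset.Ico p0 r := by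
        ext i
        simp only [hPdef, Finset.mem_filter, Finset.mem_range, Finset.mem_Ico]
        constructor
        · intro hi
          exact ⟨P.min'_le i (by simp only [hPdef, Finset.mem_filter, Finset.mem_range]; exact hi),
            hi.1⟩
        · rintro ⟨h1, h2⟩
          refine ⟨h2, ?_⟩
          have : lst l p0 ≤ lst l i := (lst_smon hl).mon h1 h2
          omega
      rw [this, Nat.card_Ico]
    by_cases hQ : Q.Nonempty
    · -- both nonempty
      set q0 := Q.max' hQ with hq0def
      have hq0 : q0 < r ∧ ust r u q0 < a := by
        have := Q.max'_mem hQ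
        simp only [hQdef, Finset.mem_filter, Finset.mem_range] at this
        exact this
      obtain ⟨q, hq0q, hqr, heq⟩ := ust_ex u hq0.1
      have hqa : u q - (q - q0) + 1 ≤ a := by omega
      have hQcard : Q.card = q0 + 1 := by
        have : Q = Finset.range (q0 + 1) := by
          ext i
          simp only [hQdef, Finset.mem_filter, Finset.mem_range]
          constructor
          · intro hi
            have : i ≤ q0 := Q.le_max' i
              (by simp only [hQdef, Finset.mem_filter, Finset.mem_range]; exact hi)
            omega
          · intro hi
            have hir : i < r := by omega
            have : ust r u i ≤ ust r u q0 := (ust_smon hl1 hall).mon (by omega) hq0.1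
            exact ⟨hir, by omega⟩
        rw [this, Finset.card_range]
      have hq0p0 : q0 < p0 := by
        by_contra hc
        push_neg at hc
        have : p0 ∈ Q := by
          simp only [hQdef, Finset.mem_filter, Finset.mem_range]
          have : ust r u p0 ≤ ust r u q0 := (ust_smon hl1 hall).mon hc hq0.1
          exact ⟨hp0.1, by omega⟩
        exact (Finset.disjoint_left.1 hdisj (P.min'_mem hP)) this
      by_cases hpq : q < p
      · have hcov : X ⊆ (X.filter fun x => φ x ≤ q) ∪ (X.filter fun x => q < φ x ∧ φ x < p)
            ∪ (X.filter fun x => p ≤ φ x) := by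
          intro x hx
          simp only [Finset.mem_union, Finset.mem_filter]
          by_cases h1 : φ x ≤ q
          · exact Or.inl (Or.inl ⟨hx, h1⟩)
          by_cases h2 : p ≤ φ x
          · exact Or.inr ⟨hx, h2⟩
          · exact Or.inl (Or.inr ⟨hx, by omega, by omega⟩)
        have c1 := sublo q q0 hq0q hqr hqa
        have c3 := subhi p p0 hpp0 hp0.1 hpb
        have c2 : (X.filter fun x => q < φ x ∧ φ x < p).card ≤ p - q - 1 := by
          have := submid (fun _ => True) (X.filter fun x => q < φ x ∧ φ x < p)
            (fun x hx => (Finset.mem_filter.1 hx).1) (Finset.Ioo q p)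
            (fun x hx => by
              have := (Finset.mem_filter.1 hx).2
              exact Finset.mem_Ioo.2 ⟨this.1, this.2⟩)
          rw [Nat.card_Ioo] at this
          omega
        have := card_le_three hcov
        omega
      · -- p ≤ q : use hall
        push_neg at hpq
        have hhall := hall (show p ≤ q by omega) hqr
        have hXIcc : X.card ≤ b + 1 - a := by
          have : X ⊆ Finset.Icc a b := by
            intro x hx
            have := hXsub x hx
            exact Finset.mem_Icc.2 ⟨this.2.1, this.2.2⟩
          have := Finset.card_le_card this
          rw [Nat.card_Icc] at this
          omega
        omega
    · -- P nonempty, Q empty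
      have hQcard : Q.card = 0 := by
        rw [Finset.card_eq_zero]
        exact Finset.not_nonempty_iff_eq_empty.1 hQ
      have hcov : X ⊆ (X.filter fun x => φ x < p) ∪ (X.filter fun x => p ≤ φ x) := by
        intro x hx
        simp only [Finset.mem_union, Finset.mem_filter]
        by_cases h1 : p ≤ φ x
        · exact Or.inr ⟨hx, h1⟩
        · exact Or.inl ⟨hx, by omega⟩
      have c1 : (X.filter fun x => φ x < p).card ≤ p := by
        have := submid (fun _ => True) (X.filter fun x => φ x < p)
          (fun x hx => (Finset.mem_filter.1 hx).1) (Finset.range p)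
          (fun x hx => Finset.mem_range.2 (Finset.mem_filter.1 hx).2)
        rw [Finset.card_range] at this
        exact this
      have c2 := subhi p p0 hpp0 hp0.1 hpb
      have := card_le_two hcov
      omega
  · by_cases hQ : Q.Nonempty
    · -- Q nonempty, P empty
      have hPcard : P.card = 0 := by
        rw [Finset.card_eq_zero]
        exact Finset.not_nonempty_iff_eq_empty.1 hP
      set q0 := Q.max' hQ with hq0def
      have hq0 : q0 < r ∧ ust r u q0 < a := by
        have := Q.max'_mem hQ
        simp only [hQdef, Finset.mem_filter, Finset.mem_range] at this
        exact this
      obtain ⟨q, hq0q, hqr, heq⟩ := ust_ex u hq0.1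
      have hqa : u q - (q - q0) + 1 ≤ a := by omega
      have hQcard : Q.card = q0 + 1 := by
        have : Q = Finset.range (q0 + 1) := by
          ext i
          simp only [hQdef, Finset.mem_filter, Finset.mem_range]
          constructor
          · intro hi
            have : i ≤ q0 := Q.le_max' i
              (by simp only [hQdef, Finset.mem_filter, Finset.mem_range]; exact hi)
            omega
          · intro hi
            have hir : i < r := by omega
            have : ust r u i ≤ ust r u q0 := (ust_smon hl1 hall).mon (by omega) hq0.1
            exact ⟨hir, by omega⟩
        rw [this, Finset.card_range]
      have hcov : X ⊆ (X.filter fun x => φ x ≤ q) ∪ (X.filter fun x => q < φ x) := by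
        intro x hx
        simp only [Finset.mem_union, Finset.mem_filter]
        by_cases h1 : φ x ≤ q
        · exact Or.inl ⟨hx, h1⟩
        · exact Or.inr ⟨hx, by omega⟩
      have c1 := sublo q q0 hq0q hqr hqa
      have c2 : (X.filter fun x => q < φ x).card ≤ r - q - 1 := by
        have := submid (fun _ => True) (X.filter fun x => q < φ x)
          (fun x hx => (Finset.mem_filter.1 hx).1) (Finset.Ioo q r)
          (fun x hx => by
            have h2 := (Finset.mem_filter.1 hx).2
            have h3 := (hφ x (hXsub x (Finset.mem_filter.1 hx).1).1).1
            exact Finset.mem_Ioo.2 ⟨h2, h3⟩)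
        rw [Nat.card_Ioo] at this
        omega
      have := card_le_two hcov
      omega
    · -- both empty
      have hPcard : P.card = 0 := by

        rw [Finset.card_eq_zero]; exact Finset.not_nonempty_iff_eq_empty.1 hP
      have hQcard : Q.card = 0 := by
        rw [Finset.card_eq_zero]; exact Finset.not_nonempty_iff_eq_empty.1 hQ
      have : X.card ≤ r := by
        have := submid (fun _ => True) X (fun x hx => hx) (Finset.range r)
          (fun x hx => Finset.mem_range.2 (hφ x (hXsub x hx).1).1)
        rw [Finset.card_range] at this
        exact this
      omega

theorem mch_normalize_iff (hl : Mon r l) (hu : Mon r u) (hl1 : ∀ i < r, 1 ≤ l i)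
    (hall : ∀ ⦃i j⦄, i ≤ j → j < r → l i + (j - i) ≤ u j) (T : Finset ℕ) :
    Mch r l u T ↔ Mch r (lst l) (ust r u) T := by
  constructor
  · exact mch_normalize hl hu hl1 hall T
  · rintro ⟨φ, hinj, hφ⟩
    refine ⟨φ, hinj, fun x hx => ?_⟩
    obtain ⟨h1, h2, h3⟩ := hφ x hx
    refine ⟨h1, le_trans (le_lst _) h2, le_trans h3 (ust_le_self h1)⟩

end Normalize
section Deletion

def pia (a x : ℕ) : ℕ := if x < a then x else x - 1
def siga (a y : ℕ) : ℕ := if y < a then y else y + 1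
def La (a z : ℕ) : ℕ := if z ≤ a then z else z - 1
def Ua (a z : ℕ) : ℕ := if z < a then z else z - 1

lemma siga_pia {a x : ℕ} (hx : x ≠ a) : siga a (pia a x) = x := by
  simp only [siga, pia]; split_ifs <;> omega

lemma pia_inj {a x y : ℕ} (hx : x ≠ a) (hy : y ≠ a) (h : pia a x = pia a y) : x = y := by
  simp only [pia] at h; split_ifs at h <;> omega

lemma arith1 {a lo hi x : ℕ} (hx : x ≠ a) (h1 : lo ≤ x) (h2 : x ≤ hi) :
    La a lo ≤ pia a x ∧ pia a x ≤ Ua a hi := by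
  simp only [La, Ua, pia]; split_ifs <;> omega

lemma arith2 {a lo hi x : ℕ} (ha : 1 ≤ a) (hx : x ≠ a) (h1 : La a lo ≤ pia a x)
    (h2 : pia a x ≤ Ua a hi) : lo ≤ x ∧ x ≤ hi := by
  simp only [La, Ua, pia] at h1 h2; split_ifs at h1 h2 <;> omega

lemma La_mono {a z1 z2 : ℕ} (h : z1 ≤ z2) : La a z1 ≤ La a z2 := by
  simp only [La]; split_ifs <;> omega

lemma Ua_mono {a z1 z2 : ℕ} (h : z1 ≤ z2) : Ua a z1 ≤ Ua a z2 := by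
  simp only [Ua]; split_ifs <;> omega

lemma La_pos {a z : ℕ} (ha : 1 ≤ a) (hz : 1 ≤ z) : 1 ≤ La a z := by
  simp only [La]; split_ifs <;> omega

lemma LaUa_le' {a lo hi : ℕ} (h : lo ≤ hi) (hd : ¬ (lo = a ∧ hi = a)) : La a lo ≤ Ua a hi := by
  have hd' : lo ≠ a ∨ hi ≠ a := by tauto
  simp only [La, Ua]
  rcases hd' with hd' | hd' <;> split_ifs <;> omega

lemma Ua_bound {a hi K : ℕ} (ha : 1 ≤ a) (haK : a ≤ K) (hK : hi ≤ K) : Ua a hi ≤ K - 1 := by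
  simp only [Ua]; split_ifs <;> omega

lemma LaUa_le {a lo hi d : ℕ} (h : lo + d ≤ hi) (hstrict : a ≤ hi → lo ≤ a → lo + d < hi) :
    La a lo + d ≤ Ua a hi := by
  simp only [La, Ua]; split_ifs <;> omega

lemma mch_relabel {r : ℕ} {l u : ℕ → ℕ} {a : ℕ} (ha : 1 ≤ a) (T : Finset ℕ) (haT : a ∉ T) :
    Mch r l u T ↔ Mch r (fun i => La a (l i)) (fun i => Ua a (u i)) (T.image (pia a)) := by
  constructor
  · rintro ⟨φ, hinj, hφ⟩
    refine ⟨fun y => φ (siga a y), ?_, ?_⟩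
    · intro y1 hy1 y2 hy2 heq
      simp only [Finset.coe_image, Set.mem_image, Finset.mem_coe] at hy1 hy2
      obtain ⟨x1, hx1, rfl⟩ := hy1
      obtain ⟨x2, hx2, rfl⟩ := hy2
      have hne1 : x1 ≠ a := fun h => haT (h ▸ hx1)
      have hne2 : x2 ≠ a := fun h => haT (h ▸ hx2)
      simp only [siga_pia hne1, siga_pia hne2] at heq
      rw [hinj hx1 hx2 heq]
    · intro y hy
      obtain ⟨x, hx, rfl⟩ := Finset.mem_image.1 hy
      have hne : x ≠ a := fun h => haT (h ▸ hx)
      simp only [siga_pia hne]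
      obtain ⟨h1, h2, h3⟩ := hφ x hx
      exact ⟨h1, (arith1 hne h2 h3).1, (arith1 hne h2 h3).2⟩
  · rintro ⟨ψ, hinj, hψ⟩
    refine ⟨fun x => ψ (pia a x), ?_, ?_⟩
    · intro x1 hx1 x2 hx2 heq
      have hne1 : x1 ≠ a := fun h => haT (h ▸ hx1)
      have hne2 : x2 ≠ a := fun h => haT (h ▸ hx2)
      have hm1 : pia a x1 ∈ (T.image (pia a) : Finset ℕ) :=
        Finset.mem_image.2 ⟨x1, hx1, rfl⟩
      have hm2 : pia a x2 ∈ (T.image (pia a) : Finset ℕ) :=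
        Finset.mem_image.2 ⟨x2, hx2, rfl⟩
      simp only at heq
      exact pia_inj hne1 hne2 (hinj hm1 hm2 heq)
    · intro x hx
      have hne : x ≠ a := fun h => haT (h ▸ hx)
      have hm : pia a x ∈ (T.image (pia a) : Finset ℕ) := Finset.mem_image.2 ⟨x, hx, rfl⟩
      obtain ⟨h1, h2, h3⟩ := hψ _ hm
      exact ⟨h1, (arith2 ha hne h2 h3).1, (arith2 ha hne h2 h3).2⟩

lemma mch_drop {r : ℕ} {l1 u1 : ℕ → ℕ} {i0 : ℕ} (hi0 : i0 < r)
    (hempty : ∀ x : ℕ, ¬ (l1 i0 ≤ x ∧ x ≤ u1 i0)) (T : Finset ℕ) :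
    Mch r l1 u1 T ↔
      Mch (r-1) (fun i => l1 (if i < i0 then i else i+1))
        (fun i => u1 (if i < i0 then i else i+1)) T := by
  constructor
  · rintro ⟨φ, hinj, hφ⟩
    have hne : ∀ x ∈ T, φ x ≠ i0 := by
      intro x hx h
      obtain ⟨h1, h2, h3⟩ := hφ x hx
      rw [h] at h2 h3
      exact hempty x ⟨h2, h3⟩
    refine ⟨fun x => if φ x < i0 then φ x else φ x - 1, ?_, ?_⟩
    · intro x1 hx1 x2 hx2 heq
      have := hne x1 hx1
      have := hne x2 hx2
      apply hinj hx1 hx2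
      simp only at heq
      split_ifs at heq <;> omega
    · intro x hx
      obtain ⟨h1, h2, h3⟩ := hφ x hx
      have h4 := hne x hx
      dsimp only
      have hidx : (if (if φ x < i0 then φ x else φ x - 1) < i0 then
          (if φ x < i0 then φ x else φ x - 1) else (if φ x < i0 then φ x else φ x - 1) + 1)
          = φ x := by
        split_ifs <;> omega
      rw [hidx]
      exact ⟨by split_ifs <;> omega, h2, h3⟩
  · rintro ⟨ψ, hinj, hψ⟩
    refine ⟨fun x => if ψ x < i0 then ψ x else ψ x + 1, ?_, ?_⟩
    · intro x1 hx1 x2 hx2 heq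
      apply hinj hx1 hx2
      simp only at heq
      split_ifs at heq <;> omega
    · intro x hx
      obtain ⟨h1, h2, h3⟩ := hψ x hx
      dsimp only at h2 h3 ⊢
      exact ⟨by split_ifs <;> omega, h2, h3⟩

theorem del_core {r m : ℕ} {l u : ℕ → ℕ} (hl : SMon r l) (hu : SMon r u)
    (hb : ∀ i < r, 1 ≤ l i ∧ l i ≤ u i ∧ u i ≤ m + r) {a : ℕ} (ha : 1 ≤ a) (ham : a ≤ m + r) :
    ∃ (r' m' : ℕ) (l2 u2 : ℕ → ℕ), m' + r' + 1 = m + r ∧ SMon r' l2 ∧ SMon r' u2 ∧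
      (∀ i < r', 1 ≤ l2 i ∧ l2 i ≤ u2 i ∧ u2 i ≤ m' + r') ∧
      ∀ T : Finset ℕ, a ∉ T → (Mch r l u T ↔ Mch r' l2 u2 (T.image (pia a))) := by
  by_cases hA : ∃ i, i < r ∧ l i = a ∧ u i = a
  · -- an interval is exactly {a} : drop it
    obtain ⟨i0, hi0r, hli0, hui0⟩ := hA
    set r' := r - 1 with hr'def
    set ι := fun i : ℕ => if i < i0 then i else i + 1 with hιdef
    set l1 := fun i => La a (l (ι i)) with hl1def
    set u1 := fun i => Ua a (u (ι i)) with hu1def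
    have hιlt : ∀ i, i < r' → ι i < r := by intro i h; rw [hιdef]; dsimp only; split_ifs <;> omega
    have hιmon : ∀ i j, i ≤ j → ι i ≤ ι j := by
      intro i j h; rw [hιdef]; dsimp only; split_ifs <;> omega
    have hιne : ∀ i, ι i ≠ i0 := by intro i; rw [hιdef]; dsimp only; split_ifs <;> omega
    have hmonl : Mon r' l1 := fun i j hij hj => La_mono (hl.mon (hιmon i j hij) (hιlt j hj))
    have hmonu : Mon r' u1 := fun i j hij hj => Ua_mono (hu.mon (hιmon i j hij) (hιlt j hj))
    have hb1 : ∀ i < r', 1 ≤ l1 i ∧ l1 i ≤ u1 i ∧ u1 i ≤ m + r' := by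
      intro i hi
      have hIr : ι i < r := hιlt i hi
      obtain ⟨hc1, hc2, hc3⟩ := hb (ι i) hIr
      have hnla : ¬ (l (ι i) = a ∧ u (ι i) = a) := by
        rintro ⟨h1, _⟩
        exact hιne i (hl.injOn hIr hi0r (h1.trans hli0.symm))
      exact ⟨La_pos ha hc1, LaUa_le' hc2 hnla, by
        have := Ua_bound (hi := u (ι i)) ha ham hc3
        have : Ua a (u (ι i)) ≤ m + r - 1 := this
        simp only [hu1def]
        omega⟩
    have hall1 : ∀ ⦃i j⦄, i ≤ j → j < r' → l1 i + (j - i) ≤ u1 j := by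
      intro i j hij hj
      have hIr : ι i < r := hιlt i (by omega)
      have hJr : ι j < r := hιlt j hj
      have hIJ : ι i ≤ ι j := hιmon i j hij
      have hadd := hl.add_le hIJ hJr
      have hlJuJ := (hb (ι j) hJr).2.1
      apply LaUa_le
      · -- l (ι i) + (j - i) ≤ u (ι j)
        have : ι j - ι i ≥ j - i := by rw [hιdef]; dsimp only; split_ifs <;> omega
        omega
      · intro hau hla
        by_cases hc : i < i0 ∧ i0 ≤ j
        · have hIJd : ι j - ι i = j - i + 1 := by rw [hιdef]; dsimp only; split_ifs <;> omega
          omega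
        · have hIJd : ι j - ι i = j - i := by rw [hιdef]; dsimp only; split_ifs <;> omega
          have hi0out : i0 < ι i ∨ ι j < i0 := by rw [hιdef]; dsimp only; split_ifs <;> omega
          by_contra hcon
          push_neg at hcon
          have htight : u (ι j) = l (ι i) + (j - i) ∧ l (ι j) = u (ι j) := by omega
          set p := ι i + (a - l (ι i)) with hpdef
          have hpI : ι i ≤ p := by omega
          have hpJ : p ≤ ι j := by omega
          have hpr : p < r := by omega
          have hlp : l p = a := by
            have h1 := hl.add_le hpI hpr
            have h2 := hl.add_le hpJ hJr
            omega
          have hup : u p = a := by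
            have h1 := (hb p hpr).2.1
            have h2 := hu.add_le hpJ hJr
            omega
          have : p = i0 := hl.injOn hpr hi0r (hlp.trans hli0.symm)
          omega
    have hl11 : ∀ i < r', 1 ≤ l1 i := fun i hi => (hb1 i hi).1
    refine ⟨r', m, lst l1, ust r' u1, by omega, lst_smon hmonl, ust_smon hl11 hall1, ?_, ?_⟩
    · intro i hi
      refine ⟨le_trans (hl11 i hi) (le_lst i), lst_le_ust hl11 hall1 hi, ?_⟩
      exact le_trans (ust_le_self hi) (hb1 i hi).2.2
    · intro T haT
      rw [mch_relabel ha T haT, mch_drop hi0r (by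
        intro x
        simp only [hli0, hui0, La, Ua]
        split_ifs <;> omega) (T.image (pia a))]
      exact mch_normalize_iff hmonl hmonu hl11 hall1 (T.image (pia a))
  · -- no interval equals {a}
    push_neg at hA
    have hm : 1 ≤ m := by
      by_contra hm0
      push_neg at hm0
      interval_cases m
      have har : a ≤ r := by omega
      have hir : a - 1 < r := by omega
      have hl0 := (hb 0 (by omega)).1
      have h1 : l 0 + (a - 1) ≤ l (a-1) := hl.add_le (by omega) hir
      have h2 : u (a-1) + (r - 1 - (a-1)) ≤ u (r-1) := hu.add_le (by omega) (by omega)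
      have h3 := (hb (r-1) (by omega)).2.2
      have h4 := (hb (a-1) hir).2.1
      exact hA (a-1) hir (by omega) (by omega)
    set l1 := fun i => La a (l i) with hl1def
    set u1 := fun i => Ua a (u i) with hu1def
    have hmonl : Mon r l1 := fun i j hij hj => La_mono (hl.mon hij hj)
    have hmonu : Mon r u1 := fun i j hij hj => Ua_mono (hu.mon hij hj)
    have hb1 : ∀ i < r, 1 ≤ l1 i ∧ l1 i ≤ u1 i ∧ u1 i ≤ (m - 1) + r := by
      intro i hi
      obtain ⟨hc1, hc2, hc3⟩ := hb i hi
      refine ⟨La_pos ha hc1, LaUa_le' hc2 (by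
        rintro ⟨e1, e2⟩
        exact hA i hi e1 e2), ?_⟩
      have := Ua_bound (hi := u i) ha ham hc3
      simp only [hu1def]
      omega
    have hall1 : ∀ ⦃i j⦄, i ≤ j → j < r → l1 i + (j - i) ≤ u1 j := by
      intro i j hij hj
      have hir : i < r := by omega
      have hadd := hl.add_le hij hj
      have hlJuJ := (hb j hj).2.1
      apply LaUa_le
      · omega
      · intro hau hla
        by_contra hcon
        push_neg at hcon
        have htight : u j = l i + (j - i) ∧ l j = u j := by omega
        set p := i + (a - l i) with hpdef
        have hpI : i ≤ p := by omega
        have hpJ : p ≤ j := by omega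
        have hpr : p < r := by omega
        have hlp : l p = a := by
          have h1 := hl.add_le hpI hpr
          have h2 := hl.add_le hpJ hj
          omega
        have hup : u p = a := by
          have h1 := (hb p hpr).2.1
          have h2 := hu.add_le hpJ hj
          omega
        exact hA p hpr hlp hup
    have hl11 : ∀ i < r, 1 ≤ l1 i := fun i hi => (hb1 i hi).1
    refine ⟨r, m - 1, lst l1, ust r u1, by omega, lst_smon hmonl, ust_smon hl11 hall1, ?_, ?_⟩
    · intro i hi
      refine ⟨le_trans (hl11 i hi) (le_lst i), lst_le_ust hl11 hall1 hi, ?_⟩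
      exact le_trans (ust_le_self hi) (hb1 i hi).2.2
    · intro T haT
      rw [mch_relabel ha T haT]
      exact mch_normalize_iff hmonl hmonu hl11 hall1 (T.image (pia a))

end Deletion
section Dual

variable (r : ℕ) (f : ℕ → ℕ)

/-- number of indices `i < r` with `f i < x` -/
def cntlt (x : ℕ) : ℕ := ((Finset.range r).filter fun i => f i < x).card
/-- number of indices `i < r` with `f i ≤ x` -/
def cntle (x : ℕ) : ℕ := ((Finset.range r).filter fun i => f i ≤ x).card

variable {r f}

lemma cntlt_mono {x y : ℕ} (h : x ≤ y) : cntlt r f x ≤ cntlt r f y := by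
  apply Finset.card_le_card
  intro i hi
  simp only [Finset.mem_filter, Finset.mem_range] at hi ⊢
  omega

lemma cntle_mono {x y : ℕ} (h : x ≤ y) : cntle r f x ≤ cntle r f y := by
  apply Finset.card_le_card
  intro i hi
  simp only [Finset.mem_filter, Finset.mem_range] at hi ⊢
  omega

lemma cnt_eq_card_le_one (hf : SMon r f) (x : ℕ) :
    ((Finset.range r).filter fun i => f i = x).card ≤ 1 := by
  apply Finset.card_le_one.2
  intro i hi j hj
  simp only [Finset.mem_filter, Finset.mem_range] at hi hj
  exact hf.injOn hi.1 hj.1 (hi.2.trans hj.2.symm)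

lemma cntlt_step (hf : SMon r f) (x : ℕ) : cntlt r f (x+1) ≤ cntlt r f x + 1 := by
  have hsub : (Finset.range r).filter (fun i => f i < x + 1) ⊆
      (Finset.range r).filter (fun i => f i < x) ∪ (Finset.range r).filter (fun i => f i = x) := by
    intro i hi
    simp only [Finset.mem_filter, Finset.mem_union, Finset.mem_range] at hi ⊢
    omega
  have := Finset.card_le_card hsub
  have h2 := Finset.card_union_le ((Finset.range r).filter (fun i => f i < x))
    ((Finset.range r).filter (fun i => f i = x))
  have h3 := cnt_eq_card_le_one hf x
  unfold cntlt
  omega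

lemma cntle_step (hf : SMon r f) (x : ℕ) : cntle r f (x+1) ≤ cntle r f x + 1 := by
  have hsub : (Finset.range r).filter (fun i => f i ≤ x + 1) ⊆
      (Finset.range r).filter (fun i => f i ≤ x) ∪
        (Finset.range r).filter (fun i => f i = x + 1) := by
    intro i hi
    simp only [Finset.mem_filter, Finset.mem_union, Finset.mem_range] at hi ⊢
    omega
  have := Finset.card_le_card hsub
  have h2 := Finset.card_union_le ((Finset.range r).filter (fun i => f i ≤ x))
    ((Finset.range r).filter (fun i => f i = x + 1))
  have h3 := cnt_eq_card_le_one hf (x+1)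
  unfold cntle
  omega

lemma cntlt_le (hf : SMon r f) (hf1 : ∀ i < r, 1 ≤ f i) (p : ℕ) : cntlt r f (p+1) ≤ p := by
  have : cntlt r f (p+1) ≤ (Finset.Icc 1 p).card := by
    apply Finset.card_le_card_of_injOn f
    · intro i hi
      simp only [Finset.mem_coe, Finset.mem_filter, Finset.mem_range] at hi
      exact Finset.mem_Icc.2 ⟨hf1 i hi.1, by omega⟩
    · intro i hi j hj
      simp only [Finset.coe_filter, Set.mem_setOf_eq, Finset.mem_range] at hi hj
      exact hf.injOn hi.1 hj.1
  rw [Nat.card_Icc] at this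
  omega

lemma cntle_le (hf : SMon r f) (hf1 : ∀ i < r, 1 ≤ f i) (p : ℕ) : cntle r f p ≤ p := by
  have : cntle r f p ≤ (Finset.Icc 1 p).card := by
    apply Finset.card_le_card_of_injOn f
    · intro i hi
      simp only [Finset.mem_coe, Finset.mem_filter, Finset.mem_range] at hi
      exact Finset.mem_Icc.2 ⟨hf1 i hi.1, hi.2⟩
    · intro i hi j hj
      simp only [Finset.coe_filter, Set.mem_setOf_eq, Finset.mem_range] at hi hj
      exact hf.injOn hi.1 hj.1
  rw [Nat.card_Icc] at this
  omega

lemma cntlt_all {K : ℕ} (hK : ∀ i < r, f i < K) : cntlt r f K = r := by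
  unfold cntlt
  rw [Finset.filter_true_of_mem (by intro i hi; exact hK i (Finset.mem_range.1 hi)),
    Finset.card_range]

lemma cntle_all {K : ℕ} (hK : ∀ i < r, f i ≤ K) : cntle r f K = r := by
  unfold cntle
  rw [Finset.filter_true_of_mem (by intro i hi; exact hK i (Finset.mem_range.1 hi)),
    Finset.card_range]

end Dual
section Dual2

/-- `fF r m u p = p - #{i < r : u i ≤ p}` : max number of "east steps" among first `p`. -/
def fF (r : ℕ) (u : ℕ → ℕ) (p : ℕ) : ℕ := p - cntlt r u (p+1)
def gG (r : ℕ) (l : ℕ → ℕ) (p : ℕ) : ℕ := p - cntle r l p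

def lamd (r m : ℕ) (u : ℕ → ℕ) (j : ℕ) : ℕ :=
  if h : ((Finset.range (m+r+1)).filter fun p => j + 1 ≤ fF r u p).Nonempty
  then ((Finset.range (m+r+1)).filter fun p => j + 1 ≤ fF r u p).min' h else 0

def nud (r m : ℕ) (l : ℕ → ℕ) (j : ℕ) : ℕ :=
  if h : ((Finset.range (m+r+1)).filter fun p => gG r l p ≤ j).Nonempty
  then ((Finset.range (m+r+1)).filter fun p => gG r l p ≤ j).max' h else 0

def mud (r m : ℕ) (l : ℕ → ℕ) (j : ℕ) : ℕ := nud r m l j + 1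

variable {r m : ℕ} {l u : ℕ → ℕ}

section fgFacts

variable (hl : SMon r l) (hu : SMon r u) (hb : ∀ i < r, 1 ≤ l i ∧ l i ≤ u i ∧ u i ≤ m + r)

include hu hb in
lemma fF_mono : ∀ {p q : ℕ}, p ≤ q → fF r u p ≤ fF r u q := by
  have step : ∀ p, fF r u p ≤ fF r u (p+1) := by
    intro p
    have h1 := cntlt_step hu (p+1)
    have h2 := cntlt_le hu (fun i hi => le_trans (hb i hi).1 (hb i hi).2.1) p
    unfold fF
    omega
  intro p q h
  exact monotone_nat_of_le_succ step h

include hu in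
lemma fF_step (p : ℕ) : fF r u (p+1) ≤ fF r u p + 1 := by
  have := cntlt_mono (f := u) (r := r) (show p + 1 ≤ p + 1 + 1 by omega)
  unfold fF
  omega

include hu hb in
lemma fF_top : fF r u (m+r) = m := by
  have : cntlt r u (m+r+1) = r := cntlt_all (fun i hi => by have := (hb i hi).2.2; omega)
  unfold fF
  omega

include hl hb in
lemma gG_mono : ∀ {p q : ℕ}, p ≤ q → gG r l p ≤ gG r l q := by
  have step : ∀ p, gG r l p ≤ gG r l (p+1) := by
    intro p
    have h1 := cntle_step hl p
    have h2 := cntle_le hl (fun i hi => (hb i hi).1) p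
    unfold gG
    omega
  intro p q h
  exact monotone_nat_of_le_succ step h

include hl in
lemma gG_step (p : ℕ) : gG r l (p+1) ≤ gG r l p + 1 := by
  have := cntle_mono (f := l) (r := r) (show p ≤ p + 1 by omega)
  unfold gG
  omega

include hl hb in
lemma gG_top : gG r l (m+r) = m := by
  have : cntle r l (m+r) = r := cntle_all (fun i hi => by
    have h1 := (hb i hi).2.1
    have h2 := (hb i hi).2.2
    omega)
  unfold gG
  omega

include hb in
lemma gG_le_fF (p : ℕ) : gG r l p ≤ fF r u p := by
  have : cntlt r u (p+1) ≤ cntle r l p := by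
    apply Finset.card_le_card
    intro i hi
    simp only [Finset.mem_filter, Finset.mem_range] at hi ⊢
    have := (hb i hi.1).2.1
    exact ⟨hi.1, by omega⟩
  unfold fF gG
  omega

lemma gG_zero : gG r l 0 = 0 := by unfold gG; omega

lemma fF_zero : fF r u 0 = 0 := by unfold fF; omega

include hu hb in
lemma lamd_spec {j : ℕ} (hj : j < m) :
    j + 1 ≤ fF r u (lamd r m u j) ∧ lamd r m u j ≤ m + r ∧ 1 ≤ lamd r m u j ∧
    (∀ p ≤ m + r, j + 1 ≤ fF r u p → lamd r m u j ≤ p) := by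
  have hne : ((Finset.range (m+r+1)).filter fun p => j + 1 ≤ fF r u p).Nonempty := by
    refine ⟨m + r, ?_⟩
    simp only [Finset.mem_filter, Finset.mem_range]
    rw [fF_top hu hb]
    omega
  rw [lamd, dif_pos hne]
  have hmem := Finset.min'_mem _ hne
  simp only [Finset.mem_filter, Finset.mem_range] at hmem
  refine ⟨hmem.2, by omega, ?_, ?_⟩
  · by_contra hc
    push_neg at hc
    have h0 : ((Finset.range (m+r+1)).filter fun p => j + 1 ≤ fF r u p).min' hne = 0 := by omega
    rw [h0] at hmem
    rw [fF_zero] at hmem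
    omega
  · intro p hp hfp
    apply Finset.min'_le
    simp only [Finset.mem_filter, Finset.mem_range]
    exact ⟨by omega, hfp⟩

include hl hb in
lemma nud_spec {j : ℕ} (hj : j < m) :
    gG r l (nud r m l j) ≤ j ∧ nud r m l j < m + r ∧
    (∀ p ≤ m + r, gG r l p ≤ j → p ≤ nud r m l j) := by
  have hne : ((Finset.range (m+r+1)).filter fun p => gG r l p ≤ j).Nonempty := by
    refine ⟨0, ?_⟩
    simp only [Finset.mem_filter, Finset.mem_range]
    rw [gG_zero]
    omega
  rw [nud, dif_pos hne]
  have hmem := Finset.max'_mem _ hne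
  simp only [Finset.mem_filter, Finset.mem_range] at hmem
  refine ⟨hmem.2, ?_, ?_⟩
  · have hne2 : ((Finset.range (m+r+1)).filter fun p => gG r l p ≤ j).max' hne ≠ m + r := by
      intro h
      rw [h, gG_top hl hb] at hmem
      omega
    omega
  · intro p hp hgp
    apply Finset.le_max'
    simp only [Finset.mem_filter, Finset.mem_range]
    exact ⟨by omega, hgp⟩

include hl hu hb in
lemma lamd_smon : SMon m (lamd r m u) := by
  intro j j' hjj' hj'
  obtain ⟨h1, h2, h3, h4⟩ := lamd_spec hu hb (show j < m by omega)
  obtain ⟨h1', h2', h3', h4'⟩ := lamd_spec hu hb hj'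
  have hle : lamd r m u j ≤ lamd r m u j' := h4 _ h2' (by omega)
  rcases eq_or_lt_of_le hle with heq | h
  · exfalso
    -- minimality: fF at lamd j is exactly j+1
    have hstep := fF_step hu (lamd r m u j - 1)
    have hmin : ¬ (j + 1 ≤ fF r u (lamd r m u j - 1)) := by
      intro hc
      have := h4 _ (by omega) hc
      omega
    have heq2 : lamd r m u j - 1 + 1 = lamd r m u j := by omega
    rw [heq2] at hstep
    rw [heq] at hstep hmin
    omega
  · exact h

include hl hu hb in
lemma nud_smon : SMon m (nud r m l) := by
  intro j j' hjj' hj'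
  obtain ⟨h1, h2, h3⟩ := nud_spec hl hb (show j < m by omega)
  obtain ⟨h1', h2', h3'⟩ := nud_spec hl hb hj'
  have hstep := gG_step hl (p := nud r m l j)
  have : gG r l (nud r m l j + 1) ≤ j + 1 := by omega
  have := h3' (nud r m l j + 1) (by omega) (by omega)
  omega

include hl hu hb in
lemma lamd_le_mud {j : ℕ} (hj : j < m) : lamd r m u j ≤ mud r m l j := by
  obtain ⟨h1, h2, h3, h4⟩ := lamd_spec hu hb hj
  obtain ⟨h1', h2', h3'⟩ := nud_spec hl hb hj
  have hgf := gG_le_fF (l := l) (u := u) hb (lamd r m u j - 1)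
  have hmin : ¬ (j + 1 ≤ fF r u (lamd r m u j - 1)) := by
    intro hc
    have := h4 _ (by omega) hc
    omega
  have := h3' (lamd r m u j - 1) (by omega) (by omega)
  unfold mud
  omega

end fgFacts

lemma smon_of_succ {m : ℕ} {f : ℕ → ℕ} (h : ∀ j, j + 1 < m → f j < f (j+1)) : SMon m f := by
  intro i j hij hj
  induction j with
  | zero => omega
  | succ j ih =>
    rcases Nat.lt_succ_iff_lt_or_eq.1 hij with h' | h'
    · exact lt_trans (ih h' (by omega)) (h j hj)
    · subst h'; exact h i hj

lemma dc_mem {r s : ℕ} {F : Finset ℕ} (hF : F ⊆ Finset.range r)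
    (hdc : ∀ i ∈ F, ∀ i', i' ≤ i → i' ∈ F) (hcard : s ≤ F.card) (hs : 1 ≤ s) : s - 1 ∈ F := by
  by_contra h
  have hsub : F ⊆ Finset.range (s-1) := by
    intro i hi
    rw [Finset.mem_range]
    by_contra h2
    push_neg at h2
    exact h (hdc i hi (s-1) (by omega))
  have := Finset.card_le_card hsub
  rw [Finset.card_range] at this
  omega

/-- completion of an increasing partial matching into a full increasing choice. -/
lemma ext_complete {m : ℕ} {lam mu : ℕ → ℕ} (hlam : SMon m lam) (hmu : SMon m mu)
    (hlm : ∀ j < m, lam j ≤ mu j) (hl1 : ∀ j < m, 1 ≤ lam j) {T : Finset ℕ} {φ : ℕ → ℕ}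
    (hT1 : ∀ x ∈ T, 1 ≤ x)
    (hφ : ∀ x ∈ T, φ x < m ∧ lam (φ x) ≤ x ∧ x ≤ mu (φ x))
    (hinc : ∀ x ∈ T, ∀ y ∈ T, x < y → φ x < φ y) :
    ∃ c : ℕ → ℕ, SMon m c ∧ (∀ j < m, lam j ≤ c j ∧ c j ≤ mu j) ∧
      ∀ x ∈ T, ∃ j, j < m ∧ c j = x := by
  classical
  set F : ℕ → ℕ → ℕ := fun j prev =>
    if h : (T.filter fun x => prev < x).Nonempty then
      (if (T.filter fun x => prev < x).min' h ≤ max (lam j) (prev + 1)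
          ∨ φ ((T.filter fun x => prev < x).min' h) ≤ j
        then (T.filter fun x => prev < x).min' h else max (lam j) (prev + 1))
    else max (lam j) (prev + 1) with hFdef
  have step : ∀ j prev, j < m → prev < mu j → (∀ x ∈ T, φ x < j → x ≤ prev) →
      (lam j ≤ F j prev ∧ F j prev ≤ mu j) ∧ prev < F j prev ∧
      (∀ x ∈ T, φ x ≤ j → x ≤ F j prev) ∧
      (∀ x ∈ T, prev < x → x ≤ F j prev → F j prev = x) := by
    intro j prev hj hpmu h3
    by_cases h : (T.filter fun x => prev < x).Nonempty
    case neg =>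
      have hnone : ∀ x ∈ T, x ≤ prev := by
        intro x hx
        by_contra hc
        exact h ⟨x, Finset.mem_filter.2 ⟨hx, by omega⟩⟩
      have hFv : F j prev = max (lam j) (prev + 1) := by
        rw [hFdef]; exact dif_neg h
      rw [hFv]
      have h1 := hlm j hj
      refine ⟨⟨le_max_left _ _, by omega⟩, by omega, ?_, ?_⟩
      · intro x hx _
        have := hnone x hx
        omega
      · intro x hx hpx _
        have := hnone x hx
        omega
    case pos =>
      set y := (T.filter fun x => prev < x).min' h with hydef
      have hymem := Finset.min'_mem _ h
      rw [← hydef] at hymem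
      rw [Finset.mem_filter] at hymem
      obtain ⟨hyT, hyp⟩ := hymem
      have hymin : ∀ x ∈ T, prev < x → y ≤ x := by
        intro x hx hpx
        exact Finset.min'_le _ _ (Finset.mem_filter.2 ⟨hx, hpx⟩)
      have hφy : j ≤ φ y := by
        by_contra hc
        have := h3 y hyT (by omega)
        omega
      obtain ⟨hφym, hly, huy⟩ := hφ y hyT
      have hlamy : lam j ≤ y := le_trans (hlam.mon hφy hφym) hly
      by_cases hcond : y ≤ max (lam j) (prev + 1) ∨ φ y ≤ j
      · have hFv : F j prev = y := by
          rw [hFdef]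
          simp only [dif_pos h]
          rw [if_pos]
          exact hcond
        rw [hFv]
        have hymu : y ≤ mu j := by
          rcases hcond with hc | hc
          · have h1 := hlm j hj
            omega
          · have hyj : φ y = j := by omega
            rw [hyj] at huy
            exact huy
        refine ⟨⟨hlamy, hymu⟩, hyp, ?_, ?_⟩
        · intro x hx hφx
          by_cases hxp : x ≤ prev
          · omega
          · have hyx := hymin x hx (by omega)
            rcases eq_or_lt_of_le hyx with h' | h'
            · omega
            · have := hinc y hyT x hx h'
              omega
        · intro x hx hpx hxy
          have := hymin x hx hpx
          omega
      · have hFv : F j prev = max (lam j) (prev + 1) := by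
          rw [hFdef]
          simp only [dif_pos h]
          rw [if_neg]
          exact hcond
        push_neg at hcond
        rw [hFv]
        have h1 := hlm j hj
        refine ⟨⟨le_max_left _ _, by omega⟩, by omega, ?_, ?_⟩
        · intro x hx hφx
          by_cases hxp : x ≤ prev
          · omega
          · exfalso
            have hyx := hymin x hx (by omega)
            rcases eq_or_lt_of_le hyx with h' | h'
            · subst h'
              omega
            · have := hinc y hyT x hx h'
              omega
        · intro x hx hpx hxb
          exfalso
          have := hymin x hx hpx
          omega
  set c : ℕ → ℕ := fun j => Nat.rec (F 0 0) (fun j' prev => F (j'+1) prev) j with hcdef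
  have hc0 : c 0 = F 0 0 := rfl
  have hcs : ∀ j, c (j+1) = F (j+1) (c j) := fun _ => rfl
  have inv : ∀ j, j < m → (lam j ≤ c j ∧ c j ≤ mu j) ∧ (∀ x ∈ T, φ x ≤ j → x ≤ c j) := by
    intro j
    induction j with
    | zero =>
      intro h0
      have h1 : (0:ℕ) < mu 0 := lt_of_lt_of_le (hl1 0 h0) (hlm 0 h0)
      have := step 0 0 h0 h1 (fun x hx hc => by omega)
      rw [← hc0] at this
      exact ⟨this.1, this.2.2.1⟩
    | succ j ih =>
      intro hj
      have hjm : j < m := by omega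
      obtain ⟨⟨b1, b2⟩, e⟩ := ih hjm
      have hcmu : c j < mu (j+1) := lt_of_le_of_lt b2 (hmu (by omega) hj)
      have := step (j+1) (c j) hj hcmu (fun x hx hφx => e x hx (by omega))
      rw [← hcs j] at this
      exact ⟨this.1, this.2.2.1⟩
  have hstrict : ∀ j, j + 1 < m → c j < c (j+1) := by
    intro j hj
    have hjm : j < m := by omega
    obtain ⟨⟨b1, b2⟩, e⟩ := inv j hjm
    have hcmu : c j < mu (j+1) := lt_of_le_of_lt b2 (hmu (by omega) hj)
    have := step (j+1) (c j) hj hcmu (fun x hx hφx => e x hx (by omega))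
    rw [← hcs j] at this
    exact this.2.1
  have place : ∀ j, j < m → ∀ x ∈ T, x ≤ c j → ∃ j', j' < m ∧ c j' = x := by
    intro j
    induction j with
    | zero =>
      intro h0 x hx hxc
      have h1 : (0:ℕ) < mu 0 := lt_of_lt_of_le (hl1 0 h0) (hlm 0 h0)
      have := step 0 0 h0 h1 (fun x hx hc => by omega)
      rw [← hc0] at this
      have := this.2.2.2 x hx (hT1 x hx) hxc
      exact ⟨0, h0, this⟩
    | succ j ih =>
      intro hj x hx hxc
      by_cases hxj : x ≤ c j
      · exact ih (by omega) x hx hxj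
      · have hjm : j < m := by omega
        obtain ⟨⟨b1, b2⟩, e⟩ := inv j hjm
        have hcmu : c j < mu (j+1) := lt_of_le_of_lt b2 (hmu (by omega) hj)
        have := step (j+1) (c j) hj hcmu (fun x hx hφx => e x hx (by omega))
        rw [← hcs j] at this
        exact ⟨j+1, hj, this.2.2.2 x hx (by omega) hxc⟩
  refine ⟨c, smon_of_succ hstrict, fun j hj => (inv j hj).1, ?_⟩
  intro x hx
  have hφxm := (hφ x hx).1
  have hm1 : m - 1 < m := by omega
  have := (inv (m-1) hm1).2 x hx (by omega)
  exact place (m-1) hm1 x hx this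

end Dual2
section DualMain

/-- prefix count -/
def pc (A : Finset ℕ) (p : ℕ) : ℕ := (A.filter fun y => y ≤ p).card

lemma pc_lt {A : Finset ℕ} {x y : ℕ} (hx : x ∈ A) (hy : y ∈ A) (hxy : x < y) :
    pc A x < pc A y := by
  have hnm : y ∉ A.filter (fun z => z ≤ x) := by
    simp only [Finset.mem_filter]
    push_neg
    intro _
    omega
  have hsub : insert y (A.filter fun z => z ≤ x) ⊆ A.filter (fun z => z ≤ y) := by
    intro z hz
    rcases Finset.mem_insert.1 hz with rfl | hz'
    · exact Finset.mem_filter.2 ⟨hy, le_rfl⟩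
    · simp only [Finset.mem_filter] at hz' ⊢
      exact ⟨hz'.1, by omega⟩
  have := Finset.card_le_card hsub
  rw [Finset.card_insert_of_notMem hnm] at this
  unfold pc
  omega

lemma pc_injOn {A : Finset ℕ} {T : Finset ℕ} (hTA : ∀ x ∈ T, x ∈ A) :
    Set.InjOn (fun x => pc A x - 1) T := by
  intro x hx y hy heq
  rw [Finset.mem_coe] at hx hy
  by_contra hne
  rcases lt_trichotomy x y with h' | h' | h'
  · have h1 := pc_lt (hTA x hx) (hTA y hy) h'
    have h2 : 1 ≤ pc A x := Finset.card_pos.2 ⟨x, Finset.mem_filter.2 ⟨hTA x hx, le_rfl⟩⟩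
    simp only at heq
    omega
  · exact hne h'
  · have h1 := pc_lt (hTA y hy) (hTA x hx) h'
    have h2 : 1 ≤ pc A y := Finset.card_pos.2 ⟨y, Finset.mem_filter.2 ⟨hTA y hy, le_rfl⟩⟩
    simp only at heq
    omega

lemma pc_pred {A : Finset ℕ} {x : ℕ} (hx : x ∈ A) (h1 : 1 ≤ x) :
    pc A x = pc A (x - 1) + 1 := by
  have heq : A.filter (fun z => z ≤ x) = insert x (A.filter fun z => z ≤ x - 1) := by
    ext z
    simp only [Finset.mem_filter, Finset.mem_insert]
    constructor
    · rintro ⟨hz, hzx⟩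
      by_cases hzz : z = x
      · exact Or.inl hzz
      · exact Or.inr ⟨hz, by omega⟩
    · rintro (rfl | ⟨hz, hzx⟩)
      · exact ⟨hx, le_rfl⟩
      · exact ⟨hz, by omega⟩
  have hnm : x ∉ A.filter (fun z => z ≤ x - 1) := by
    simp only [Finset.mem_filter]
    push_neg
    intro _
    omega
  unfold pc
  rw [heq, Finset.card_insert_of_notMem hnm]

lemma pc_pos {A : Finset ℕ} {x : ℕ} (hx : x ∈ A) : 1 ≤ pc A x :=
  Finset.card_pos.2 ⟨x, Finset.mem_filter.2 ⟨hx, le_rfl⟩⟩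

lemma pc_le_card (A : Finset ℕ) (p : ℕ) : pc A p ≤ A.card :=
  Finset.card_le_card (Finset.filter_subset _ _)

lemma pc_mono (A : Finset ℕ) {p q : ℕ} (h : p ≤ q) : pc A p ≤ pc A q := by
  apply Finset.card_le_card
  intro z hz
  simp only [Finset.mem_filter] at hz ⊢
  exact ⟨hz.1, by omega⟩

lemma pc_sdiff {K : ℕ} {A : Finset ℕ} (hA : A ⊆ Finset.Icc 1 K) {p : ℕ} (hp : p ≤ K) :
    pc (Finset.Icc 1 K \ A) p + pc A p = p := by
  have hps : A.filter (fun z => z ≤ p) ⊆ Finset.Icc 1 p := by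
    intro z hz
    simp only [Finset.mem_filter] at hz
    have := Finset.mem_Icc.1 (hA hz.1)
    exact Finset.mem_Icc.2 ⟨this.1, hz.2⟩
  have hceq : (Finset.Icc 1 K \ A).filter (fun z => z ≤ p) =
      Finset.Icc 1 p \ A.filter (fun z => z ≤ p) := by
    ext z
    simp only [Finset.mem_filter, Finset.mem_sdiff, Finset.mem_Icc]
    constructor
    · rintro ⟨⟨⟨h1, h2⟩, h3⟩, h4⟩
      exact ⟨⟨h1, h4⟩, fun hc => h3 hc.1⟩
    · rintro ⟨⟨h1, h4⟩, h3⟩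
      exact ⟨⟨⟨h1, by omega⟩, fun hc => h3 ⟨hc, h4⟩⟩, h4⟩
  unfold pc
  rw [hceq, Finset.card_sdiff_of_subset hps, Nat.card_Icc]
  have := Finset.card_le_card hps
  rw [Nat.card_Icc] at this
  omega

theorem dual_core {r m : ℕ} {l u : ℕ → ℕ} (hl : SMon r l) (hu : SMon r u)
    (hb : ∀ i < r, 1 ≤ l i ∧ l i ≤ u i ∧ u i ≤ m + r) :
    ∃ lam mu : ℕ → ℕ, SMon m lam ∧ SMon m mu ∧
      (∀ j < m, 1 ≤ lam j ∧ lam j ≤ mu j ∧ mu j ≤ m + r) ∧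
      ∀ T : Finset ℕ, ↑T ⊆ Set.Icc 1 (m+r) →
        ((∃ S : Finset ℕ, ↑S ⊆ Set.Icc 1 (m+r) ∧ S.card = r ∧ Mch r l u S ∧ Disjoint T S)
          ↔ Mch m lam mu T) := by
  classical
  refine ⟨lamd r m u, mud r m l, lamd_smon hl hu hb, ?_, ?_, ?_⟩
  · intro j j' hjj' hj'
    have := nud_smon hl hu hb hjj' hj'
    unfold mud
    omega
  · intro j hj
    obtain ⟨h1, h2, h3, h4⟩ := lamd_spec hu hb hj
    obtain ⟨h1', h2', h3'⟩ := nud_spec hl hb hj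
    exact ⟨by omega, lamd_le_mud hl hu hb hj, by unfold mud; omega⟩
  intro T hT
  have hTmem : ∀ x ∈ T, 1 ≤ x ∧ x ≤ m + r := by
    intro x hx
    exact Set.mem_Icc.1 (hT (Finset.mem_coe.2 hx))
  constructor
  · -- from a disjoint basis to a matching into the dual presentation
    rintro ⟨S, hS, hScard, ⟨φ, hinj, hφ⟩, hdisj⟩
    have hSmem : ∀ x ∈ S, 1 ≤ x ∧ x ≤ m + r := by
      intro x hx
      exact Set.mem_Icc.1 (hS (Finset.mem_coe.2 hx))
    have hSsub : S ⊆ Finset.Icc 1 (m+r) := by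
      intro x hx
      exact Finset.mem_Icc.2 (hSmem x hx)
    have claimB : ∀ p, pc S p ≤ cntle r l p := by
      intro p
      apply Finset.card_le_card_of_injOn φ
      · intro x hx
        simp only [Finset.mem_coe, Finset.mem_filter] at hx ⊢
        obtain ⟨h1, h2, h3⟩ := hφ x hx.1
        exact ⟨Finset.mem_range.2 h1, by omega⟩
      · apply hinj.mono
        intro x hx
        simp only [Finset.coe_filter, Set.mem_setOf_eq] at hx
        exact hx.1
    have claimA : ∀ p, cntlt r u (p+1) ≤ pc S p := by
      intro p
      have h1 : pc S p + (S.filter fun x => ¬ x ≤ p).card = S.card :=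
        Finset.card_filter_add_card_filter_not _
      have h2 : (S.filter fun x => ¬ x ≤ p).card ≤
          ((Finset.range r).filter fun i => ¬ u i < p + 1).card := by
        apply Finset.card_le_card_of_injOn φ
        · intro x hx
          simp only [Finset.mem_coe, Finset.mem_filter] at hx ⊢
          obtain ⟨g1, g2, g3⟩ := hφ x hx.1
          have := hx.2
          exact ⟨Finset.mem_range.2 g1, by omega⟩
        · apply hinj.mono
          intro x hx
          simp only [Finset.coe_filter, Set.mem_setOf_eq] at hx
          exact hx.1
      have h3 : cntlt r u (p+1) + ((Finset.range r).filter fun i => ¬ u i < p + 1).card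
          = r := by
        have := Finset.card_filter_add_card_filter_not
          (s := Finset.range r) (p := fun i => u i < p + 1)
        rw [Finset.card_range] at this
        exact this
      omega
    set C := Finset.Icc 1 (m+r) \ S with hCdef
    have hCcard : C.card = m := by
      rw [hCdef, Finset.card_sdiff_of_subset hSsub, Nat.card_Icc, hScard]
      omega
    have hTC : ∀ x ∈ T, x ∈ C := by
      intro x hx
      rw [hCdef, Finset.mem_sdiff]
      exact ⟨Finset.mem_Icc.2 (hTmem x hx), Finset.disjoint_left.1 hdisj hx⟩
    refine ⟨fun x => pc C x - 1, pc_injOn hTC, ?_⟩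
    intro x hx
    dsimp only
    have hxC : x ∈ C := hTC x hx
    obtain ⟨hx1, hxm⟩ := hTmem x hx
    have ht1 : 1 ≤ pc C x := pc_pos hxC
    have htm : pc C x ≤ m := by
      have := pc_le_card C x
      omega
    have hpcx := pc_sdiff hSsub (p := x) hxm
    rw [← hCdef] at hpcx
    have hfx : pc C x ≤ fF r u x := by
      have := claimA x
      unfold fF
      omega
    refine ⟨by omega, ?_, ?_⟩
    · -- lamd (pc C x - 1) ≤ x
      obtain ⟨g1, g2, g3, g4⟩ := lamd_spec hu hb (show pc C x - 1 < m by omega)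
      exact g4 x hxm (by omega)
    · -- x ≤ mud (pc C x - 1)
      obtain ⟨g1, g2, g3⟩ := nud_spec hl hb (show pc C x - 1 < m by omega)
      have hpcx1 := pc_sdiff hSsub (p := x - 1) (by omega)
      rw [← hCdef] at hpcx1
      have hBx1 := claimB (x-1)
      have hpred := pc_pred hxC hx1
      have hgg : gG r l (x-1) ≤ pc C x - 1 := by
        unfold gG
        omega
      have := g3 (x-1) (by omega) hgg
      unfold mud
      omega
  · -- from a matching into the dual presentation to a disjoint basis
    intro hmch
    have hlam := lamd_smon hl hu hb
    have hmus : SMon m (mud r m l) := by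
      intro j j' hjj' hj'
      have := nud_smon hl hu hb hjj' hj'
      unfold mud
      omega
    obtain ⟨φ, hφ1, hφ2⟩ := crit_to_inc hlam.mon hmus.mon T.card T rfl 0 hmch.crit
    obtain ⟨c, hcs, hcb, hcT⟩ := ext_complete hlam hmus
      (fun j hj => lamd_le_mud hl hu hb hj)
      (fun j hj => (lamd_spec hu hb hj).2.2.1)
      (fun x hx => (hTmem x hx).1)
      (fun x hx => ⟨(hφ1 x hx).2.1, (hφ1 x hx).2.2.1, (hφ1 x hx).2.2.2⟩)
      hφ2
    set C := (Finset.range m).image c with hCdef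
    have hcinj : Set.InjOn c (Finset.range m) := by
      intro i hi j hj heq
      simp only [Finset.coe_range, Set.mem_Iio] at hi hj
      exact hcs.injOn hi hj heq
    have hCcard : C.card = m := by
      rw [hCdef, Finset.card_image_of_injOn hcinj, Finset.card_range]
    have hCsub : C ⊆ Finset.Icc 1 (m+r) := by
      intro x hx
      obtain ⟨j, hj, rfl⟩ := Finset.mem_image.1 hx
      rw [Finset.mem_range] at hj
      obtain ⟨g1, g2⟩ := hcb j hj
      obtain ⟨e1, e2, e3, e4⟩ := lamd_spec hu hb hj
      obtain ⟨f1, f2, f3⟩ := nud_spec hl hb hj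
      refine Finset.mem_Icc.2 ⟨by omega, ?_⟩
      have : mud r m l j ≤ m + r := by unfold mud; omega
      omega
    have hTC : ∀ x ∈ T, x ∈ C := by
      intro x hx
      obtain ⟨j, hj, he⟩ := hcT x hx
      exact Finset.mem_image.2 ⟨j, Finset.mem_range.2 hj, he⟩
    have key1 : ∀ j < m, pc C (c j) = j + 1 := by
      intro j hj
      have heq : C.filter (fun z => z ≤ c j) = (Finset.range (j+1)).image c := by
        ext z
        simp only [hCdef, Finset.mem_filter, Finset.mem_image, Finset.mem_range]
        constructor
        · rintro ⟨⟨j', hj', rfl⟩, hle⟩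
          refine ⟨j', ?_, rfl⟩
          by_contra hc
          push_neg at hc
          have := hcs (show j < j' by omega) hj'
          omega
        · rintro ⟨j', hj', rfl⟩
          refine ⟨⟨j', by omega, rfl⟩, ?_⟩
          rcases eq_or_lt_of_le (show j' ≤ j by omega) with rfl | h'
          · exact le_rfl
          · exact (hcs h' hj).le
      rw [pc, heq, Finset.card_image_of_injOn (by
        intro i hi j' hj'
        simp only [Finset.coe_range, Set.mem_Iio] at hi hj'
        exact hcs.injOn (by omega) (by omega)), Finset.card_range]
    have hpre : ∀ p ≤ m + r, gG r l p ≤ pc C p ∧ pc C p ≤ fF r u p := by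
      intro p hp
      constructor
      · -- lower bound
        by_cases hhi : (C.filter fun z => p < z).Nonempty
        · set x := (C.filter fun z => p < z).min' hhi with hxdef
          have hxmem := Finset.min'_mem _ hhi
          rw [← hxdef, Finset.mem_filter] at hxmem
          obtain ⟨hxC, hxp⟩ := hxmem
          have hxmin : ∀ z ∈ C, p < z → x ≤ z := by
            intro z hz hpz
            exact Finset.min'_le _ _ (Finset.mem_filter.2 ⟨hz, hpz⟩)
          obtain ⟨j, hjm, hje⟩ := Finset.mem_image.1 hxC
          rw [Finset.mem_range] at hjm
          have hx1 : 1 ≤ x := (Finset.mem_Icc.1 (hCsub hxC)).1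
          have heq2 : pc C p = pc C (x - 1) := by
            apply le_antisymm
            · exact pc_mono C (by omega)
            · apply Finset.card_le_card
              intro z hz
              simp only [Finset.mem_filter] at hz ⊢
              refine ⟨hz.1, ?_⟩
              by_contra hc
              push_neg at hc
              have := hxmin z hz.1 (by omega)
              omega
          have hpcx : pc C x = j + 1 := by rw [← hje]; exact key1 j hjm
          have hpred := pc_pred hxC hx1
          obtain ⟨f1, f2, f3⟩ := nud_spec hl hb hjm
          have hxmu : x ≤ mud r m l j := by rw [← hje]; exact (hcb j hjm).2
          have hgx : gG r l (x - 1) ≤ j := by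
            have hgm : gG r l (x-1) ≤ gG r l (nud r m l j) := gG_mono hl hb (by
              unfold mud at hxmu
              omega)
            omega
          have := gG_mono hl hb (show p ≤ x - 1 by omega)
          omega
        · -- all of C is ≤ p
          have hall : C.filter (fun z => z ≤ p) = C := by
            apply Finset.filter_true_of_mem
            intro z hz
            by_contra hc
            exact hhi ⟨z, Finset.mem_filter.2 ⟨hz, by omega⟩⟩
          have : pc C p = m := by rw [pc, hall, hCcard]
          have h2 := gG_mono hl hb hp
          rw [gG_top hl hb] at h2
          omega
      · -- upper bound
        by_cases ht : pc C p = 0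
        · omega
        · have hne : (C.filter fun z => z ≤ p).Nonempty := by
            rw [← Finset.card_pos, ← pc]
            omega
          set x := (C.filter fun z => z ≤ p).max' hne with hxdef
          have hxmem := Finset.max'_mem _ hne
          rw [← hxdef, Finset.mem_filter] at hxmem
          obtain ⟨hxC, hxp⟩ := hxmem
          obtain ⟨j, hjm, hje⟩ := Finset.mem_image.1 hxC
          rw [Finset.mem_range] at hjm
          have heq2 : pc C p = pc C x := by
            apply le_antisymm
            · apply Finset.card_le_card
              intro z hz
              simp only [Finset.mem_filter] at hz ⊢
              exact ⟨hz.1, Finset.le_max' _ _ (Finset.mem_filter.2 hz)⟩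
            · exact pc_mono C hxp
          have hpcx : pc C x = j + 1 := by rw [← hje]; exact key1 j hjm
          obtain ⟨e1, e2, e3, e4⟩ := lamd_spec hu hb hjm
          have hxlam : lamd r m u j ≤ x := by rw [← hje]; exact (hcb j hjm).1
          have hf1 : (j:ℕ) + 1 ≤ fF r u x := le_trans e1 (fF_mono hu hb hxlam)
          have hf2 : fF r u x ≤ fF r u p := fF_mono hu hb hxp
          omega
    set S := Finset.Icc 1 (m+r) \ C with hSdef
    have hScard : S.card = r := by
      rw [hSdef, Finset.card_sdiff_of_subset hCsub, Nat.card_Icc, hCcard]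
      omega
    have hSmem : ∀ x ∈ S, 1 ≤ x ∧ x ≤ m + r := by
      intro x hx
      rw [hSdef, Finset.mem_sdiff] at hx
      exact Finset.mem_Icc.1 hx.1
    have hpcS : ∀ p ≤ m + r, pc S p + pc C p = p := by
      intro p hp
      rw [hSdef]
      exact pc_sdiff hCsub hp
    refine ⟨S, ?_, hScard, ?_, ?_⟩
    · intro x hx
      rw [Finset.mem_coe] at hx
      exact Set.mem_Icc.2 (hSmem x hx)
    · -- Mch r l u S
      have hSS : ∀ x ∈ S, x ∈ S := fun x hx => hx
      refine ⟨fun x => pc S x - 1, pc_injOn hSS, ?_⟩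
      intro x hx
      dsimp only
      obtain ⟨hx1, hxm⟩ := hSmem x hx
      have hs1 : 1 ≤ pc S x := pc_pos hx
      have hsr : pc S x ≤ r := by
        have := pc_le_card S x
        omega
      have hSx := hpcS x hxm
      have hprex := hpre x hxm
      have hcltle := cntlt_le hu (fun i hi => le_trans (hb i hi).1 (hb i hi).2.1) x
      have hclele := cntle_le hl (fun i hi => (hb i hi).1) x
      refine ⟨by omega, ?_, ?_⟩
      · -- l (pc S x - 1) ≤ x
        have hcard : pc S x ≤ cntle r l x := by
          unfold gG at hprex
          omega
        have hmem := dc_mem (r := r) (s := pc S x)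
          (F := (Finset.range r).filter fun i => l i ≤ x)
          (Finset.filter_subset _ _)
          (by
            intro i hi i' hi'
            simp only [Finset.mem_filter, Finset.mem_range] at hi ⊢
            exact ⟨by omega, le_trans (hl.mon hi' hi.1) hi.2⟩)
          hcard hs1
        simp only [Finset.mem_filter] at hmem
        exact hmem.2
      · -- x ≤ u (pc S x - 1)
        by_contra hc
        push_neg at hc
        have hsub : Finset.range (pc S x) ⊆ (Finset.range r).filter fun i => u i < x := by
          intro i hi
          rw [Finset.mem_range] at hi
          simp only [Finset.mem_filter, Finset.mem_range]
          refine ⟨by omega, ?_⟩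
          have := hu.mon (show i ≤ pc S x - 1 by omega) (by omega)
          omega
        have hcnt : pc S x ≤ cntlt r u x := by
          have := Finset.card_le_card hsub
          rw [Finset.card_range] at this
          exact this
        have hSx1 := hpcS (x-1) (by omega)
        have hprex1 := hpre (x-1) (by omega)
        have hpred := pc_pred hx hx1
        have hxx : x - 1 + 1 = x := by omega
        unfold fF at hprex1
        rw [hxx] at hprex1
        have hclt : cntlt r u x ≤ x - 1 := by
          have := cntlt_le hu (fun i hi => le_trans (hb i hi).1 (hb i hi).2.1) (x-1)
          rwa [hxx] at this
        omega
    · -- Disjoint T S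
      rw [Finset.disjoint_left]
      intro x hxT hxS
      rw [hSdef, Finset.mem_sdiff] at hxS
      exact hxS.2 (hTC x hxT)

end DualMain

section Alpha

variable {α : Type*}

lemma bridge {g : ℕ → α} {m r : ℕ} {lF uF : Fin r → ℕ}
    (hg : Set.InjOn g (Set.Icc 1 (m+r)))
    (hbF : ∀ i : Fin r, 1 ≤ lF i ∧ lF i ≤ uF i ∧ uF i ≤ m + r)
    {l u : ℕ → ℕ} (hlF : ∀ i : Fin r, l (i : ℕ) = lF i) (huF : ∀ i : Fin r, u (i : ℕ) = uF i)
    (I : Set α) (hIE : I ⊆ g '' Set.Icc 1 (m+r)) :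
    (∃ φ : I → Fin r, Function.Injective φ ∧
        ∀ x : I, (x : α) ∈ g '' Set.Icc (lF (φ x)) (uF (φ x))) ↔
      ∃ T : Finset ℕ, ↑T ⊆ Set.Icc 1 (m+r) ∧ g '' ↑T = I ∧ Mch r l u T := by
  classical
  constructor
  · rintro ⟨φ, hinj, hφ⟩
    refine ⟨(Finset.Icc 1 (m+r)).filter fun t => g t ∈ I, ?_, ?_, ?_⟩
    · intro t ht
      simp only [Finset.coe_filter, Set.mem_setOf_eq, Finset.mem_Icc] at ht
      exact Set.mem_Icc.2 ht.1
    · apply Set.Subset.antisymm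
      · rintro x ⟨t, ht, rfl⟩
        simp only [Finset.coe_filter, Set.mem_setOf_eq] at ht
        exact ht.2
      · intro x hx
        obtain ⟨t, ht, rfl⟩ := hIE hx
        refine ⟨t, ?_, rfl⟩
        simp only [Finset.coe_filter, Set.mem_setOf_eq, Finset.mem_Icc]
        exact ⟨Set.mem_Icc.1 ht, hx⟩
    · refine ⟨fun t => if h : g t ∈ I then (φ ⟨g t, h⟩ : ℕ) else 0, ?_, ?_⟩
      · intro t1 ht1 t2 ht2 heq
        simp only [Finset.coe_filter, Set.mem_setOf_eq, Finset.mem_Icc] at ht1 ht2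
        dsimp only at heq
        rw [dif_pos ht1.2, dif_pos ht2.2] at heq
        have h2 : φ ⟨g t1, ht1.2⟩ = φ ⟨g t2, ht2.2⟩ := Fin.val_injective heq
        have h3 : g t1 = g t2 := congrArg Subtype.val (hinj h2)
        exact hg (Set.mem_Icc.2 ht1.1) (Set.mem_Icc.2 ht2.1) h3
      · intro t ht
        simp only [Finset.mem_filter, Finset.mem_Icc] at ht
        obtain ⟨ht1, ht2⟩ := ht
        dsimp only
        rw [dif_pos ht2]
        set x : I := ⟨g t, ht2⟩ with hxdef
        obtain ⟨z, hz1, hz2⟩ := hφ x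
        have hzt : z = t := by
          apply hg _ (Set.mem_Icc.2 ht1) hz2
          have := hbF (φ x)
          rw [Set.mem_Icc] at hz1
          exact Set.mem_Icc.2 ⟨by omega, by omega⟩
        subst hzt
        rw [Set.mem_Icc] at hz1
        refine ⟨(φ x).isLt, ?_, ?_⟩
        · rw [hlF (φ x)]; exact hz1.1
        · rw [huF (φ x)]; exact hz1.2
  · rintro ⟨T, hTsub, hTI, ⟨ψ, hinjψ, hψ⟩⟩
    have hex : ∀ x : I, ∃ t, t ∈ T ∧ g t = (x : α) := by
      intro x
      have hx : (x : α) ∈ g '' ↑T := by rw [hTI]; exact x.2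
      obtain ⟨t, ht, he⟩ := hx
      exact ⟨t, Finset.mem_coe.1 ht, he⟩
    refine ⟨fun x => ⟨ψ (hex x).choose, (hψ _ (hex x).choose_spec.1).1⟩, ?_, ?_⟩
    · intro x y heq
      have h1 : ψ (hex x).choose = ψ (hex y).choose := congrArg Fin.val heq
      have h2 := hinjψ (Finset.mem_coe.2 (hex x).choose_spec.1)
        (Finset.mem_coe.2 (hex y).choose_spec.1) h1
      have h3 : (x : α) = (y : α) := by
        rw [← (hex x).choose_spec.2, ← (hex y).choose_spec.2, h2]
      exact Subtype.ext h3
    · intro x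
      set t := (hex x).choose with htdef
      obtain ⟨htT, hgt⟩ := (hex x).choose_spec
      obtain ⟨h1, h2, h3⟩ := hψ t htT
      refine ⟨t, ?_, hgt⟩
      rw [Set.mem_Icc]
      constructor
      · rw [hlF ⟨ψ t, h1⟩] at h2
        exact h2
      · rw [huF ⟨ψ t, h1⟩] at h3
        exact h3

lemma latticePath_iff' {M : Matroid α} :
    LatticePath M ↔ ∃ (r m : ℕ) (g : ℕ → α) (l u : ℕ → ℕ),
      Set.InjOn g (Set.Icc 1 (m+r)) ∧ g '' Set.Icc 1 (m+r) = M.E ∧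
      SMon r l ∧ SMon r u ∧ (∀ i < r, 1 ≤ l i ∧ l i ≤ u i ∧ u i ≤ m + r) ∧
      ∀ I : Set α, M.Indep I ↔
        ∃ T : Finset ℕ, ↑T ⊆ Set.Icc 1 (m+r) ∧ g '' ↑T = I ∧ Mch r l u T := by
  classical
  constructor
  · rintro ⟨r, m, g, lF, uF, hg, hgE, hlF, huF, hbF, hP⟩
    obtain ⟨hN, hTP⟩ := hP
    set l : ℕ → ℕ := fun i => if h : i < r then lF ⟨i, h⟩ else 0 with hldef
    set u : ℕ → ℕ := fun i => if h : i < r then uF ⟨i, h⟩ else 0 with hudef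
    have hl : ∀ i : Fin r, l (i : ℕ) = lF i := by
      intro i
      simp only [hldef, dif_pos i.isLt, Fin.eta]
    have hu : ∀ i : Fin r, u (i : ℕ) = uF i := by
      intro i
      simp only [hudef, dif_pos i.isLt, Fin.eta]
    refine ⟨r, m, g, l, u, hg, hgE, ?_, ?_, ?_, ?_⟩
    · intro i j hij hj
      have hir : i < r := by omega
      rw [hl ⟨i, hir⟩, hl ⟨j, hj⟩]
      exact hlF (show (⟨i, hir⟩ : Fin r) < ⟨j, hj⟩ from hij)
    · intro i j hij hj
      have hir : i < r := by omega
      rw [hu ⟨i, hir⟩, hu ⟨j, hj⟩]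
      exact huF (show (⟨i, hir⟩ : Fin r) < ⟨j, hj⟩ from hij)
    · intro i hi
      rw [hl ⟨i, hi⟩, hu ⟨i, hi⟩]
      exact hbF ⟨i, hi⟩
    · intro I
      rw [hTP I]
      constructor
      · rintro ⟨hIE, hφ⟩
        exact (bridge hg hbF hl hu I (show _ ⊆ g '' Set.Icc 1 (m+r) by rw [hgE]; exact hIE)).1 hφ
      · intro hT
        have hIE : I ⊆ M.E := by
          obtain ⟨T, hT1, hT2, _⟩ := hT
          rw [← hT2, ← hgE]
          exact Set.image_mono hT1
        exact ⟨hIE, (bridge hg hbF hl hu I (show _ ⊆ g '' Set.Icc 1 (m+r) by rw [hgE]; exact hIE)).2 hT⟩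
  · rintro ⟨r, m, g, l, u, hg, hgE, hls, hus, hb, hind⟩
    refine ⟨r, m, g, fun i => l i, fun i => u i, hg, hgE, ?_, ?_, ?_, ?_, ?_⟩
    · intro i j hij
      exact hls (show (i : ℕ) < (j : ℕ) from hij) j.isLt
    · intro i j hij
      exact hus (show (i : ℕ) < (j : ℕ) from hij) j.isLt
    · intro i
      exact hb i i.isLt
    · intro i
      rw [← hgE]
      apply Set.image_mono
      intro z hz
      dsimp only at hz
      rw [Set.mem_Icc] at hz ⊢
      have := hb i i.isLt
      omega
    · intro I
      rw [hind I]
      have hbF : ∀ i : Fin r, 1 ≤ l (i:ℕ) ∧ l (i:ℕ) ≤ u (i:ℕ) ∧ u (i:ℕ) ≤ m + r :=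
        fun i => hb i i.isLt
      constructor
      · intro hT
        have hIE : I ⊆ M.E := by
          obtain ⟨T, hT1, hT2, _⟩ := hT
          rw [← hT2, ← hgE]
          exact Set.image_mono hT1
        exact ⟨hIE,
          (bridge hg hbF (fun i => rfl) (fun i => rfl) I (show _ ⊆ g '' Set.Icc 1 (m+r) by rw [hgE]; exact hIE)).2 hT⟩
      · rintro ⟨hIE, hφ⟩
        exact (bridge hg hbF (fun i => rfl) (fun i => rfl) I (show _ ⊆ g '' Set.Icc 1 (m+r) by rw [hgE]; exact hIE)).1 hφ

end Alpha

section Final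

variable {α : Type*}

lemma pia_siga {a y : ℕ} : pia a (siga a y) = y := by
  simp only [pia, siga]; split_ifs <;> omega

lemma lp_delone (M : Matroid α) (h : LatticePath M) (e : α) :
    LatticePath (M ↾ (M.E \ {e})) := by
  classical
  by_cases he : e ∈ M.E
  case neg =>
    rw [Set.diff_singleton_eq_self he, Matroid.restrict_ground_eq_self]
    exact h
  case pos =>
  obtain ⟨r, m, g, l, u, hg, hgE, hls, hus, hb, hind⟩ := latticePath_iff'.1 h
  rw [← hgE] at he
  obtain ⟨a, haIcc, rfl⟩ := he
  rw [Set.mem_Icc] at haIcc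
  obtain ⟨ha1, ham⟩ := haIcc
  obtain ⟨r', m', l2, u2, hsum, hl2, hu2, hb2, hiffD⟩ := del_core hls hus hb ha1 ham
  have hsig : ∀ y ∈ Set.Icc 1 (m'+r'), siga a y ∈ Set.Icc 1 (m+r) ∧ siga a y ≠ a := by
    intro y hy
    rw [Set.mem_Icc] at hy
    constructor
    · rw [Set.mem_Icc]
      simp only [siga]; split_ifs <;> omega
    · simp only [siga]; split_ifs <;> omega
  apply latticePath_iff'.2
  refine ⟨r', m', fun y => g (siga a y), l2, u2, ?_, ?_, hl2, hu2, hb2, ?_⟩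
  · intro y1 hy1 y2 hy2 heq
    dsimp only at heq
    have h2 : siga a y1 = siga a y2 := hg (hsig y1 hy1).1 (hsig y2 hy2).1 heq
    simp only [siga] at h2
    split_ifs at h2 <;> omega
  · rw [Matroid.restrict_ground_eq, ← hgE]
    apply Set.Subset.antisymm
    · rintro x ⟨y, hy, rfl⟩
      obtain ⟨hmem, hne⟩ := hsig y hy
      refine ⟨⟨siga a y, hmem, rfl⟩, ?_⟩
      simp only [Set.mem_singleton_iff]
      intro hc
      exact hne (hg hmem (Set.mem_Icc.2 ⟨ha1, ham⟩) hc)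
    · rintro x ⟨⟨z, hz, rfl⟩, hne⟩
      simp only [Set.mem_singleton_iff] at hne
      have hza : z ≠ a := by
        intro hc; subst hc; exact hne rfl
      refine ⟨pia a z, ?_, ?_⟩
      · rw [Set.mem_Icc] at hz ⊢
        simp only [pia]; split_ifs <;> omega
      · dsimp only
        rw [siga_pia hza]
  · intro I
    rw [Matroid.restrict_indep_iff, hind I]
    constructor
    · rintro ⟨⟨T, hTsub, hTI, hmch⟩, hIsub⟩
      have haT : a ∉ T := by
        intro hc
        have hgaI : g a ∈ I := by
          rw [← hTI]; exact ⟨a, Finset.mem_coe.2 hc, rfl⟩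
        have := hIsub hgaI
        simp at this
      refine ⟨T.image (pia a), ?_, ?_, (hiffD T haT).1 hmch⟩
      · intro y hy
        rw [Finset.coe_image] at hy
        obtain ⟨x, hx, rfl⟩ := hy
        have hxm := Set.mem_Icc.1 (hTsub hx)
        have hxa : x ≠ a := fun hc => haT (hc ▸ (Finset.mem_coe.1 hx))
        rw [Set.mem_Icc]
        simp only [pia]; split_ifs <;> omega
      · rw [Finset.coe_image, Set.image_image, ← hTI]
        apply Set.image_congr
        intro x hx
        have hxa : x ≠ a := fun hc => haT (hc ▸ (Finset.mem_coe.1 hx))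
        rw [siga_pia hxa]
    · rintro ⟨T', hT'sub, hT'I, hmch'⟩
      set T := T'.image (siga a) with hTdef
      have haT : a ∉ T := by
        intro hc
        rw [hTdef, Finset.mem_image] at hc
        obtain ⟨y, hy, he⟩ := hc
        have := (hsig y (hT'sub (Finset.mem_coe.2 hy))).2
        exact this he
      have hTsub : ↑T ⊆ Set.Icc 1 (m+r) := by
        intro x hx
        rw [hTdef, Finset.coe_image] at hx
        obtain ⟨y, hy, rfl⟩ := hx
        exact (hsig y (hT'sub hy)).1
      have hTimg : T.image (pia a) = T' := by
        rw [hTdef, Finset.image_image]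
        have : T'.image (pia a ∘ siga a) = T'.image id :=
          Finset.image_congr (fun x _ => pia_siga)
        rw [this, Finset.image_id]
      have hgT : g '' ↑T = I := by
        rw [hTdef, Finset.coe_image, Set.image_image]
        exact hT'I
      refine ⟨⟨T, hTsub, hgT, ?_⟩, ?_⟩
      · have hiT := hiffD T haT
        rw [hTimg] at hiT
        exact hiT.2 hmch'
      · rw [← hgT]
        rintro x ⟨y, hy, rfl⟩
        refine ⟨by rw [← hgE]; exact ⟨y, hTsub hy, rfl⟩, ?_⟩
        simp only [Set.mem_singleton_iff]
        intro hc
        have hya : y ≠ a := fun h2 => haT (h2 ▸ Finset.mem_coe.1 hy)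
        exact hya (hg (hTsub hy) (Set.mem_Icc.2 ⟨ha1, ham⟩) hc)

lemma lp_dual (M : Matroid α) (h : LatticePath M) : LatticePath M✶ := by
  classical
  obtain ⟨r, m, g, l, u, hg, hgE, hls, hus, hb, hind⟩ := latticePath_iff'.1 h
  obtain ⟨lam, mu, hlam, hmu, hbd, hiff⟩ := dual_core hls hus hb
  have hcomm : r + m = m + r := Nat.add_comm r m
  set TT : Set α → Finset ℕ := fun J => (Finset.Icc 1 (m+r)).filter fun t => g t ∈ J
    with hTTdef
  have hTT1 : ∀ J ⊆ M.E, ↑(TT J) ⊆ Set.Icc 1 (m+r) ∧ g '' ↑(TT J) = J := by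
    intro J hJ
    constructor
    · intro t ht
      simp only [hTTdef, Finset.coe_filter, Set.mem_setOf_eq, Finset.mem_Icc] at ht
      exact Set.mem_Icc.2 ht.1
    · apply Set.Subset.antisymm
      · rintro x ⟨t, ht, rfl⟩
        simp only [hTTdef, Finset.coe_filter, Set.mem_setOf_eq] at ht
        exact ht.2
      · intro x hx
        have hx2 : x ∈ g '' Set.Icc 1 (m+r) := by rw [hgE]; exact hJ hx
        obtain ⟨t, ht, rfl⟩ := hx2
        refine ⟨t, ?_, rfl⟩
        simp only [hTTdef, Finset.coe_filter, Set.mem_setOf_eq, Finset.mem_Icc]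
        exact ⟨Set.mem_Icc.1 ht, hx⟩
  have hTTeq : ∀ (J : Set α) (T : Finset ℕ), ↑T ⊆ Set.Icc 1 (m+r) → g '' ↑T = J →
      TT J = T := by
    intro J T hTs hTJ
    ext t
    simp only [hTTdef, Finset.mem_filter, Finset.mem_Icc]
    constructor
    · rintro ⟨h1, h2⟩
      rw [← hTJ] at h2
      obtain ⟨t', ht', he⟩ := h2
      have : t' = t := hg (hTs ht') (Set.mem_Icc.2 h1) he
      rw [← this]
      exact Finset.mem_coe.1 ht'
    · intro ht
      refine ⟨Set.mem_Icc.1 (hTs (Finset.mem_coe.2 ht)), ?_⟩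
      rw [← hTJ]
      exact ⟨t, Finset.mem_coe.2 ht, rfl⟩
  have hcard_le : ∀ T : Finset ℕ, Mch r l u T → T.card ≤ r := by
    rintro T ⟨φ, hinj, hφ⟩
    have := Finset.card_le_card_of_injOn φ (fun x hx => Finset.mem_range.2 (hφ x hx).1) hinj
    rwa [Finset.card_range] at this
  have hI0 : ∃ T0 : Finset ℕ, ↑T0 ⊆ Set.Icc 1 (m+r) ∧ T0.card = r ∧ Mch r l u T0 := by
    refine ⟨(Finset.range r).image l, ?_, ?_, ?_⟩
    · intro x hx
      rw [Finset.coe_image] at hx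
      obtain ⟨i, hi, rfl⟩ := hx
      rw [Finset.mem_coe, Finset.mem_range] at hi
      have := hb i hi
      exact Set.mem_Icc.2 ⟨by omega, by omega⟩
    · rw [Finset.card_image_of_injOn (by
        intro i hi j hj he
        rw [Finset.mem_coe, Finset.mem_range] at hi hj
        exact hls.injOn hi hj he), Finset.card_range]
    · have key0 : ∀ i < r, pc ((Finset.range r).image l) (l i) = i + 1 := by
        intro i hi
        have heq : ((Finset.range r).image l).filter (fun z => z ≤ l i) =
            (Finset.range (i+1)).image l := by
          ext z
          simp only [Finset.mem_filter, Finset.mem_image, Finset.mem_range]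
          constructor
          · rintro ⟨⟨i', hi', rfl⟩, hle⟩
            refine ⟨i', ?_, rfl⟩
            by_contra hc
            push_neg at hc
            have := hls (show i < i' by omega) hi'
            omega
          · rintro ⟨i', hi', rfl⟩
            refine ⟨⟨i', by omega, rfl⟩, ?_⟩
            rcases eq_or_lt_of_le (show i' ≤ i by omega) with rfl | h'
            · exact le_rfl
            · exact (hls h' hi).le
        rw [pc, heq, Finset.card_image_of_injOn (by
          intro a ha b hb' he
          rw [Finset.mem_coe, Finset.mem_range] at ha hb'
          exact hls.injOn (by omega) (by omega) he), Finset.card_range]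
      refine ⟨fun x => pc ((Finset.range r).image l) x - 1,
        pc_injOn (fun x hx => hx), ?_⟩
      intro x hx
      dsimp only
      obtain ⟨i, hi, rfl⟩ := Finset.mem_image.1 hx
      rw [Finset.mem_range] at hi
      rw [key0 i hi]
      simp only [Nat.add_sub_cancel]
      exact ⟨hi, le_rfl, (hb i hi).2.1⟩
  have hbase_card : ∀ B, M.IsBase B → (TT B).card = r := by
    intro B hB
    obtain ⟨T, hTs, hTB, hmch⟩ := (hind B).1 hB.indep
    rw [hTTeq B T hTs hTB]
    by_contra hc
    have hlt : T.card < r := lt_of_le_of_ne (hcard_le T hmch) hc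
    obtain ⟨T0, hT0s, hT0c, hT0m⟩ := hI0
    have hI0ind : M.Indep (g '' ↑T0) := (hind _).2 ⟨T0, hT0s, rfl, hT0m⟩
    have hBcard : B.encard = T.card := by
      rw [← hTB, Set.InjOn.encard_image (hg.mono hTs), Set.encard_coe_eq_coe_finsetCard]
    have hI0card : (g '' ↑T0).encard = r := by
      rw [Set.InjOn.encard_image (hg.mono hT0s), Set.encard_coe_eq_coe_finsetCard, hT0c]
    obtain ⟨x, hx, hins⟩ := hB.indep.augment hI0ind (by
      rw [hBcard, hI0card]
      exact_mod_cast hlt)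
    have heq := hB.eq_of_subset_indep hins (Set.subset_insert _ _)
    rw [Set.mem_diff] at hx
    exact hx.2 (heq ▸ Set.mem_insert x B)
  apply latticePath_iff'.2
  refine ⟨m, r, g, lam, mu, ?_, ?_, hlam, hmu, ?_, ?_⟩
  · rw [hcomm]; exact hg
  · rw [hcomm, hgE]
    exact (Matroid.dual_ground (M := M)).symm
  · intro j hj
    have := hbd j hj
    omega
  · intro I
    rw [Matroid.dual_indep_iff_exists']
    constructor
    · rintro ⟨hIE, B, hB, hdisj⟩
      obtain ⟨hTIs, hTII⟩ := hTT1 I hIE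
      refine ⟨TT I, by rw [hcomm]; exact hTIs, hTII, ?_⟩
      apply (hiff (TT I) hTIs).1
      refine ⟨TT B, (hTT1 B hB.subset_ground).1, hbase_card B hB, ?_, ?_⟩
      · obtain ⟨T, hTs, hTB, hmch⟩ := (hind B).1 hB.indep
        rw [hTTeq B T hTs hTB]
        exact hmch
      · rw [Finset.disjoint_left]
        intro t ht1 ht2
        simp only [hTTdef, Finset.mem_filter] at ht1 ht2
        exact Set.disjoint_left.1 hdisj ht1.2 ht2.2
    · rintro ⟨T, hTs', hTI, hmch⟩
      rw [hcomm] at hTs'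
      obtain ⟨S, hSs, hSc, hSm, hdisjTS⟩ := (hiff T hTs').2 hmch
      have hBind : M.Indep (g '' ↑S) := (hind _).2 ⟨S, hSs, rfl, hSm⟩
      have hIE : I ⊆ M.E := by
        rw [← hTI, ← hgE]
        exact Set.image_mono hTs'
      refine ⟨hIE, g '' ↑S, ?_, ?_⟩
      · apply hBind.isBase_of_maximal
        intro J hJ hSJ
        obtain ⟨TJ, hTJs, hTJJ, hTJm⟩ := (hind J).1 hJ
        have hJfin : J.Finite := by
          rw [← hTJJ]
          exact Set.Finite.image g TJ.finite_toSet
        apply (Set.Finite.eq_of_subset_of_encard_le' hJfin hSJ ?_)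
        rw [← hTJJ, Set.InjOn.encard_image (hg.mono hTJs), Set.encard_coe_eq_coe_finsetCard,
          Set.InjOn.encard_image (hg.mono hSs), Set.encard_coe_eq_coe_finsetCard, hSc]
        exact_mod_cast hcard_le TJ hTJm
      · rw [Set.disjoint_left]
        rintro x hxI hxS
        obtain ⟨s, hs, rfl⟩ := hxS
        have hxI2 : g s ∈ g '' ↑T := by rw [hTI]; exact hxI
        obtain ⟨t, ht, he⟩ := hxI2
        have : t = s := hg (hTs' ht) (hSs hs) he
        subst this
        exact Finset.disjoint_left.1 hdisjTS (Finset.mem_coe.1 ht) (Finset.mem_coe.1 hs)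

lemma lp_finE (M : Matroid α) (h : LatticePath M) : M.E.Finite := by
  obtain ⟨r, m, g, l, u, hg, hgE, _⟩ := latticePath_iff'.1 h
  rw [← hgE]
  exact Set.Finite.image g (Set.finite_Icc 1 (m+r))

lemma restrict_compl_empty (M : Matroid α) (D : Set α) (h : D ∩ M.E = ∅) :
    M ↾ (M.E \ D) = M := by
  have hed : M.E \ D = M.E := by
    apply Set.Subset.antisymm Set.diff_subset
    intro x hx
    refine ⟨hx, fun hD => ?_⟩
    have : x ∈ D ∩ M.E := ⟨hD, hx⟩
    rw [h] at this
    exact this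
  rw [hed, Matroid.restrict_ground_eq_self]

lemma lp_delset : ∀ (n : ℕ) (M : Matroid α), LatticePath M → ∀ D : Set α,
    (D ∩ M.E).ncard ≤ n → LatticePath (M ↾ (M.E \ D)) := by
  intro n
  induction n with
  | zero =>
    intro M h D hcard
    have hfin : (D ∩ M.E).Finite := (lp_finE M h).subset Set.inter_subset_right
    have hempty : D ∩ M.E = ∅ := (Set.ncard_eq_zero hfin).1 (by omega)
    rw [restrict_compl_empty M D hempty]
    exact h
  | succ n ih =>
    intro M h D hcard
    have hfin : (D ∩ M.E).Finite := (lp_finE M h).subset Set.inter_subset_right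
    by_cases hne : (D ∩ M.E).Nonempty
    · obtain ⟨e, heD, heE⟩ := hne
      have h1 := lp_delone M h e
      have hseteq : (M.E \ {e}) \ (D \ {e}) = M.E \ D := by
        ext x
        simp only [Set.mem_diff, Set.mem_singleton_iff]
        constructor
        · rintro ⟨⟨g1, g2⟩, g3⟩
          exact ⟨g1, fun hD => g3 ⟨hD, g2⟩⟩
        · rintro ⟨g1, g2⟩
          exact ⟨⟨g1, fun hc => g2 (hc ▸ heD)⟩, fun hc => g2 hc.1⟩
      have key : M ↾ (M.E \ D) = (M ↾ (M.E \ {e})) ↾ ((M ↾ (M.E \ {e})).E \ (D \ {e})) := by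
        have hgr : (M ↾ (M.E \ {e})).E = M.E \ {e} := rfl
        rw [hgr, hseteq, Matroid.restrict_restrict_eq]
        rw [← hseteq]
        exact Set.diff_subset
      rw [key]
      apply ih (M ↾ (M.E \ {e})) h1 (D \ {e})
      have hgr : (M ↾ (M.E \ {e})).E = M.E \ {e} := rfl
      rw [hgr]
      have hinter : (D \ {e}) ∩ (M.E \ {e}) = (D ∩ M.E) \ {e} := by
        ext x
        simp only [Set.mem_diff, Set.mem_inter_iff, Set.mem_singleton_iff]
        tauto
      have hmem : e ∈ D ∩ M.E := ⟨heD, heE⟩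
      rw [hinter, Set.ncard_diff_singleton_of_mem hmem]
      have hpos : 1 ≤ (D ∩ M.E).ncard := (Set.ncard_pos hfin).2 ⟨e, hmem⟩
      omega
    · rw [restrict_compl_empty M D (Set.not_nonempty_iff_eq_empty.1 hne)]
      exact h

end Final

end LPAux

/-- The class of lattice path matroids is closed under minors. -/
theorem latticePath_of_isMinorOf (M N : Matroid α) (hM : LatticePath M)
    (hNM : IsMinorOf N M) : LatticePath N := by
  obtain ⟨C, D, hC, hD, hdisj, rfl⟩ := hNM
  have h1 : LatticePath M✶ := LPAux.lp_dual M hM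
  have h2 : LatticePath (M✶ ↾ (M✶.E \ C)) :=
    LPAux.lp_delset ((C ∩ M✶.E).ncard) M✶ h1 C le_rfl
  have h3 : LatticePath (MCon M C) := by
    unfold MCon
    exact LPAux.lp_dual _ h2
  unfold MDel
  exact LPAux.lp_delset (((D : Set α) ∩ (MCon M C).E).ncard) (MCon M C) h3 D le_rfl
end

section
/- Let M be a rank-r lattice path matroid with ground set {1,…,r+m} and standard presentation 𝒩 = (N_1,…,N_r). If M is vertically 3-connected, then 𝒩 has the upper bound property, i.e., l_{k+2} ≤ u_k for all k ∈ {1,…,r−2}. -/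
open Set Matroid

variable {α : Type*}

/-- A standard presentation with interval endpoints `l i`, `u i` has the upper bound
property if `l (i+2) ≤ u i` for all valid indices `i`. -/
def UpperBoundProperty {r : ℕ} (l u : Fin r → ℕ) : Prop :=
  ∀ i k : Fin r, (k : ℕ) = (i : ℕ) + 2 → l k ≤ u i

private lemma encard_le_of_inj_aux {α : Type*} {s : Set α} {n : ℕ} (f : s → Fin n)
    (hf : Function.Injective f) : s.encard ≤ (n : ℕ∞) := by
  rw [show s.encard = (Set.univ : Set s).encard by
    rw [← Subtype.val_injective.encard_image, Set.image_univ, Subtype.range_coe]]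
  calc (Set.univ : Set s).encard ≤ (Set.univ : Set (Fin n)).encard :=
        Set.encard_le_encard_of_injOn (fun x _ => trivial) hf.injOn
    _ = n := by
        rw [Set.encard_univ, ENat.card_eq_coe_fintype_card, Fintype.card_fin]

/-- If a lattice path matroid with standard presentation `𝒩` is vertically 3-connected,
then `𝒩` has the upper bound property. -/
theorem upperBoundProperty_of_verticallyThreeConnected (M : Matroid ℕ) (m : ℕ) {r : ℕ}
    (l u : Fin r → ℕ) (hM : IsStandardPresentation M m l u)
    (h3 : VerticallyThreeConnected M) : UpperBoundProperty l u := by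
  obtain ⟨hE, hl, hu, hbd, hNE, hInd⟩ := hM
  intro i k hk
  by_contra hcon
  push_neg at hcon
  have hir : (i : ℕ) + 2 < r := hk ▸ k.isLt
  set A : Set ℕ := M.E ∩ Set.Iic (u i) with hA
  set B : Set ℕ := M.E ∩ Set.Ioi (u i) with hB
  have hAB : A ∪ B = M.E := by
    rw [hA, hB, ← Set.inter_union_distrib_left, Set.Iic_union_Ioi, Set.inter_univ]
  have hdisj : Disjoint A B := by
    rw [Set.disjoint_left]
    rintro x ⟨-, hx1⟩ ⟨-, hx2⟩
    exact absurd (Set.mem_Iic.mp hx1) (not_le.mpr (Set.mem_Ioi.mp hx2))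
  have indep_of : ∀ (S : Set ℕ) (φ : S → Fin r), S ⊆ M.E → Function.Injective φ →
      (∀ x : S, (x : ℕ) ∈ Set.Icc (l (φ x)) (u (φ x))) → M.Indep S :=
    fun S φ h1 h2 h3' => (hInd S).2 ⟨h1, φ, h2, h3'⟩
  have le_eRk : ∀ (X I : Set ℕ), M.Indep I → I ⊆ X → I.encard ≤ _root_.eRk M X :=
    fun X I h1 h2 =>
      le_iSup (fun J : {I : Set ℕ // M.Indep I ∧ I ⊆ X} => (J : Set ℕ).encard) ⟨I, h1, h2⟩
  have eRk_le : ∀ (X : Set ℕ) (c : ℕ∞),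
      (∀ I : Set ℕ, M.Indep I → I ⊆ X → I.encard ≤ c) → _root_.eRk M X ≤ c :=
    fun X c h => iSup_le (fun J => h J J.2.1 J.2.2)
  have memE : ∀ j : Fin r, u j ∈ M.E := by
    intro j
    rw [hE, Set.mem_Icc]
    exact ⟨le_trans (hbd j).1 (hbd j).2.1, (hbd j).2.2⟩
  -- rank of A is at most i + 2
  have hrkA : _root_.eRk M A ≤ (((i : ℕ) + 2 : ℕ) : ℕ∞) := by
    refine eRk_le _ _ (fun I hI hIA => ?_)
    obtain ⟨-, φ, hφinj, hφmem⟩ := (hInd I).1 hI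
    have hφlt : ∀ x : I, (φ x : ℕ) < (i : ℕ) + 2 := by
      intro x
      by_contra hge
      push_neg at hge
      have hkle : (k : ℕ) ≤ (φ x : ℕ) := by omega
      have h1 : l k ≤ l (φ x) := by
        rcases eq_or_lt_of_le hkle with h | h
        · exact le_of_eq (congrArg l (Fin.ext h))
        · exact (hl (Fin.lt_def.mpr h)).le
      have h2 : l (φ x) ≤ (x : ℕ) := (Set.mem_Icc.mp (hφmem x)).1
      have h3 : (x : ℕ) ≤ u i := (hIA x.2).2
      omega
    exact encard_le_of_inj_aux (fun x => ⟨(φ x : ℕ), hφlt x⟩)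
      (fun a b hab => hφinj (Fin.ext (by simpa using hab)))
  -- rank of B is at most r - i - 1
  have hrkB : _root_.eRk M B ≤ ((r - (i : ℕ) - 1 : ℕ) : ℕ∞) := by
    refine eRk_le _ _ (fun I hI hIB => ?_)
    obtain ⟨-, φ, hφinj, hφmem⟩ := (hInd I).1 hI
    have hφgt : ∀ x : I, (i : ℕ) < (φ x : ℕ) := by
      intro x
      by_contra hle
      push_neg at hle
      have h1 : u (φ x) ≤ u i := by
        rcases eq_or_lt_of_le hle with h | h
        · exact le_of_eq (congrArg u (Fin.ext h))
        · exact (hu (Fin.lt_def.mpr h)).le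
      have h2 : (x : ℕ) ≤ u (φ x) := (Set.mem_Icc.mp (hφmem x)).2
      have h3 : u i < (x : ℕ) := (hIB x.2).2
      omega
    refine encard_le_of_inj_aux
      (fun x => ⟨(φ x : ℕ) - (i : ℕ) - 1,
        by have h1 := (φ x).isLt; have h2 := hφgt x; omega⟩)
      (fun a b hab => ?_)
    have hv : (φ a : ℕ) - (i : ℕ) - 1 = (φ b : ℕ) - (i : ℕ) - 1 := by simpa using hab
    exact hφinj (Fin.ext (by have h1 := hφgt a; have h2 := hφgt b; omega))
  -- 1 ≤ rank of A
  have hA1 : (1 : ℕ∞) ≤ _root_.eRk M A := by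
    have hsub : ({u i} : Set ℕ) ⊆ A := by
      rintro x hx
      rw [Set.mem_singleton_iff] at hx
      subst hx
      exact ⟨memE i, Set.mem_Iic.mpr le_rfl⟩
    have hind : M.Indep {u i} := by
      refine indep_of _ (fun _ => i) (fun x hx => ?_) (fun a b _ => ?_) ?_
      · rw [Set.mem_singleton_iff] at hx; rw [hx]; exact memE i
      · exact Subtype.ext (a.2.trans b.2.symm)
      · rintro ⟨x, hx⟩
        rw [Set.mem_singleton_iff] at hx
        simp only [hx]
        exact Set.mem_Icc.mpr ⟨(hbd i).2.1, le_rfl⟩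
    calc (1 : ℕ∞) = ({u i} : Set ℕ).encard := (Set.encard_singleton _).symm
      _ ≤ _root_.eRk M A := le_eRk A _ hind hsub
  -- 2 ≤ rank of B
  set j1 : Fin r := ⟨r - 2, by omega⟩ with hj1
  set j2 : Fin r := ⟨r - 1, by omega⟩ with hj2
  have hij1 : i < j1 := by
    rw [Fin.lt_def]
    have := i.isLt
    simp only [hj1]
    omega
  have hj12 : j1 < j2 := by
    rw [Fin.lt_def]
    simp only [hj1, hj2]
    omega
  have hune : u j1 ≠ u j2 := ne_of_lt (hu hj12)
  have hB2 : (2 : ℕ∞) ≤ _root_.eRk M B := by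
    classical
    have hsub : ({u j1, u j2} : Set ℕ) ⊆ B := by
      rintro x hx
      rcases hx with rfl | hx
      · exact ⟨memE j1, Set.mem_Ioi.mpr (hu hij1)⟩
      · rw [Set.mem_singleton_iff] at hx
        subst hx
        exact ⟨memE j2, Set.mem_Ioi.mpr (hu (lt_trans hij1 hj12))⟩
    have hind : M.Indep {u j1, u j2} := by
      refine indep_of _ (fun x => if (x : ℕ) = u j1 then j1 else j2)
        (fun x hx => ?_) (fun a b hab => ?_) (fun x => ?_)
      · rcases hx with rfl | hx
        · exact memE j1
        · rw [Set.mem_singleton_iff] at hx; rw [hx]; exact memE j2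
      · have ha := a.2
        have hb := b.2
        simp only [Set.mem_insert_iff, Set.mem_singleton_iff] at ha hb
        apply Subtype.ext
        rcases ha with ha | ha <;> rcases hb with hb | hb
        · rw [ha, hb]
        · simp only [ha, hb, if_pos rfl, if_neg hune.symm] at hab
          exact absurd hab (Fin.ne_of_lt hj12)
        · simp only [ha, hb, if_pos rfl, if_neg hune.symm] at hab
          exact absurd hab (Fin.ne_of_gt hj12)
        · rw [ha, hb]
      · have hx := x.2
        simp only [Set.mem_insert_iff, Set.mem_singleton_iff] at hx
        show (x : ℕ) ∈ Set.Icc (l (if (x : ℕ) = u j1 then j1 else j2))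
          (u (if (x : ℕ) = u j1 then j1 else j2))
        rcases hx with hx | hx
        · rw [hx, if_pos rfl]
          exact Set.mem_Icc.mpr ⟨(hbd j1).2.1, le_rfl⟩
        · rw [hx, if_neg hune.symm]
          exact Set.mem_Icc.mpr ⟨(hbd j2).2.1, le_rfl⟩
    calc (2 : ℕ∞) = ({u j1, u j2} : Set ℕ).encard := (Set.encard_pair hune).symm
      _ ≤ _root_.eRk M B := le_eRk B _ hind hsub
  -- the matroid has rank at least r
  have hrank : (r : ℕ∞) ≤ _root_.eRank M := by
    have hsub : Set.range l ⊆ M.E := by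
      rintro x ⟨j, rfl⟩
      rw [hE, Set.mem_Icc]
      exact ⟨(hbd j).1, le_trans (hbd j).2.1 (hbd j).2.2⟩
    have hind : M.Indep (Set.range l) := by
      refine indep_of _ (fun x => x.2.choose) hsub (fun a b hab => ?_) (fun x => ?_)
      · have hab' : a.2.choose = b.2.choose := hab
        apply Subtype.ext
        rw [← a.2.choose_spec, ← b.2.choose_spec, hab']
      · show (x : ℕ) ∈ Set.Icc (l x.2.choose) (u x.2.choose)
        rw [Set.mem_Icc]
        refine ⟨x.2.choose_spec.le, ?_⟩
        have h := (hbd x.2.choose).2.1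
        rwa [x.2.choose_spec] at h
    have hcard : (Set.range l).encard = r := by
      rw [← Set.image_univ, hl.injective.encard_image, Set.encard_univ,
        ENat.card_eq_coe_fintype_card, Fintype.card_fin]
    calc (r : ℕ∞) = (Set.range l).encard := hcard.symm
      _ ≤ _root_.eRk M M.E := le_eRk M.E _ hind hsub
  have hcardA : _root_.eRk M A ≤ A.encard := eRk_le A _ (fun I _ hIA => Set.encard_le_encard hIA)
  have hcardB : _root_.eRk M B ≤ B.encard := eRk_le B _ (fun I _ hIB => Set.encard_le_encard hIB)
  by_cases h2A : (2 : ℕ∞) ≤ _root_.eRk M A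
  · refine h3 2 (by norm_num) (by norm_num) A B hAB hdisj
      ⟨le_trans h2A hcardA, le_trans hB2 hcardB, h2A, hB2, ?_⟩
    calc _root_.eRk M A + _root_.eRk M B ≤ (((i : ℕ) + 2 : ℕ) : ℕ∞) + ((r - (i : ℕ) - 1 : ℕ) : ℕ∞) :=
          add_le_add hrkA hrkB
      _ = ((r + 1 : ℕ) : ℕ∞) := by
          rw [← Nat.cast_add]
          exact congrArg _ (by omega)
      _ < ((r + 2 : ℕ) : ℕ∞) := Nat.cast_lt.mpr (by omega)
      _ = (r : ℕ∞) + 2 := by push_cast; ring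
      _ ≤ _root_.eRank M + 2 := add_le_add_left hrank 2
  · push_neg at h2A
    have hA_le1 : _root_.eRk M A ≤ 1 := Order.le_of_lt_add_one (by exact_mod_cast h2A)
    refine h3 1 (by norm_num) (by norm_num) A B hAB hdisj
      ⟨le_trans hA1 hcardA, le_trans (le_trans one_le_two hB2) hcardB, hA1,
        le_trans one_le_two hB2, ?_⟩
    calc _root_.eRk M A + _root_.eRk M B ≤ 1 + ((r - (i : ℕ) - 1 : ℕ) : ℕ∞) := add_le_add hA_le1 hrkB
      _ ≤ ((r : ℕ) : ℕ∞) := by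
          rw [show (1 : ℕ∞) = ((1 : ℕ) : ℕ∞) from rfl, ← Nat.cast_add]
          exact Nat.cast_le.mpr (by omega)
      _ < ((r + 1 : ℕ) : ℕ∞) := Nat.cast_lt.mpr (by omega)
      _ = (r : ℕ∞) + 1 := by push_cast; ring
      _ ≤ _root_.eRank M + 1 := add_le_add_left hrank 1
end

section
/- For every n ≥ 4, the matroid A_n has exactly two distinct n-element circuits, these two circuits intersect in exactly one element f, and the deletion A_n \ f is isomorphic to the uniform matroid U_{n,2n−1}. -/
open Set Matroid

variable {α : Type*}

lemma aux_split {E₁ E₂ I : Set α} (hd : Disjoint E₁ E₂) (hI : I ⊆ E₁ ∪ E₂) :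
    (I ∩ E₁).encard + (I ∩ E₂).encard = I.encard := by
  rw [← Set.encard_union_eq (hd.mono inter_subset_right inter_subset_right)]
  rw [← Set.inter_union_distrib_left, Set.inter_eq_self_of_subset_left hI]

lemma myERank_eq {M : Matroid α} {c : ℕ∞} (hub : ∀ I, M.Indep I → I.encard ≤ c)
    (hw : ∃ I, M.Indep I ∧ I.encard = c) : _root_.eRank M = c := by
  obtain ⟨I, hI, hc⟩ := hw
  refine le_antisymm (iSup_le fun J => hub _ J.2.1) ?_
  rw [← hc]
  exact le_iSup (fun J : {J : Set α // M.Indep J ∧ J ⊆ M.E} => (J : Set α).encard)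
    ⟨I, hI, hI.subset_ground⟩

/-- cancel: from c + a = b deduce c = b - a (nat casts) -/
lemma cast_eq_of_add_cast {c : ℕ∞} {a b : ℕ} (hab : a ≤ b) (h : c + (a:ℕ∞) = (b:ℕ∞)) :
    c = ((b - a : ℕ) : ℕ∞) := by
  have h2 : ((b - a : ℕ) : ℕ∞) + (a:ℕ∞) = (b:ℕ∞) := by norm_cast; omega
  exact WithTop.add_right_cancel (ENat.coe_ne_top a) (h.trans h2.symm)

lemma exists_bal {k : ℕ} (hk : 2 ≤ k) {E₁ E₂ I : Set α} (hd : Disjoint E₁ E₂)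
    (h₁ : E₁.encard = (k:ℕ∞)) (h₂ : E₂.encard = (k:ℕ∞))
    (ha : (I ∩ E₁).encard ≤ ((k-1:ℕ):ℕ∞)) (hb : (I ∩ E₂).encard ≤ ((k-1:ℕ):ℕ∞))
    (hab : (I ∩ E₁).encard + (I ∩ E₂).encard ≤ (k:ℕ∞)) :
    ∃ B, B ⊆ E₁ ∪ E₂ ∧ Disjoint B I ∧ (B ∩ E₁).encard ≤ ((k-1:ℕ):ℕ∞) ∧
      (B ∩ E₂).encard ≤ ((k-1:ℕ):ℕ∞) ∧ B.encard = (k:ℕ∞) := by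
  have hf1 : (I ∩ E₁).Finite := Set.finite_of_encard_le_coe ha
  have hf2 : (I ∩ E₂).Finite := Set.finite_of_encard_le_coe hb
  set a := (I ∩ E₁).ncard with hadef
  set b := (I ∩ E₂).ncard with hbdef
  have hca : ((a:ℕ):ℕ∞) = (I ∩ E₁).encard := hf1.cast_ncard_eq
  have hcb : ((b:ℕ):ℕ∞) = (I ∩ E₂).encard := hf2.cast_ncard_eq
  have han : a ≤ k - 1 := by rw [← Nat.cast_le (α := ℕ∞)]; rw [hca]; exact ha
  have hbn : b ≤ k - 1 := by rw [← Nat.cast_le (α := ℕ∞)]; rw [hcb]; exact hb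
  have habn : a + b ≤ k := by
    rw [← Nat.cast_le (α := ℕ∞), Nat.cast_add, hca, hcb]; exact hab
  -- sizes of E₁ \ I and E₂ \ I
  have hd1 : (E₁ \ I).encard = ((k - a : ℕ) : ℕ∞) := by
    have : E₁ \ I = E₁ \ (I ∩ E₁) := by ext y; simp [and_comm]
    rw [this]
    refine cast_eq_of_add_cast (by omega) ?_
    rw [hca, Set.encard_diff_add_encard_of_subset inter_subset_right, h₁]
  have hd2 : (E₂ \ I).encard = ((k - b : ℕ) : ℕ∞) := by
    have : E₂ \ I = E₂ \ (I ∩ E₂) := by ext y; simp [and_comm]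
    rw [this]
    refine cast_eq_of_add_cast (by omega) ?_
    rw [hcb, Set.encard_diff_add_encard_of_subset inter_subset_right, h₂]
  obtain ⟨a', b', hsum, ha1, hb1, ha2, hb2⟩ :
      ∃ a' b' : ℕ, a' + b' = k ∧ a' ≤ k - 1 ∧ b' ≤ k - 1 ∧ a' ≤ k - a ∧ b' ≤ k - b := by
    rcases Nat.eq_zero_or_pos a with h0 | h0
    · exact ⟨k - 1, 1, by omega, by omega, by omega, by omega, by omega⟩
    · exact ⟨k - a, a, by omega, by omega, by omega, by omega, by omega⟩
  obtain ⟨B₁, hB₁s, hB₁c⟩ := Set.exists_subset_encard_eq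
    (show ((a':ℕ):ℕ∞) ≤ (E₁ \ I).encard by rw [hd1]; exact_mod_cast ha2)
  obtain ⟨B₂, hB₂s, hB₂c⟩ := Set.exists_subset_encard_eq
    (show ((b':ℕ):ℕ∞) ≤ (E₂ \ I).encard by rw [hd2]; exact_mod_cast hb2)
  refine ⟨B₁ ∪ B₂, ?_, ?_, ?_, ?_, ?_⟩
  · exact union_subset ((hB₁s.trans diff_subset).trans subset_union_left)
      ((hB₂s.trans diff_subset).trans subset_union_right)
  · exact Disjoint.union_left ((disjoint_sdiff_left).mono_left hB₁s)
      ((disjoint_sdiff_left).mono_left hB₂s)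
  · have : (B₁ ∪ B₂) ∩ E₁ = B₁ := by
      apply subset_antisymm
      · rintro y ⟨hy1 | hy2, hyE⟩
        · exact hy1
        · exact absurd hyE (disjoint_right.1 hd ((hB₂s.trans diff_subset) hy2))
      · exact subset_inter subset_union_left (hB₁s.trans diff_subset)
    rw [this, hB₁c]; exact_mod_cast ha1
  · have : (B₁ ∪ B₂) ∩ E₂ = B₂ := by
      apply subset_antisymm
      · rintro y ⟨hy1 | hy2, hyE⟩
        · exact absurd hyE (disjoint_left.1 hd ((hB₁s.trans diff_subset) hy1))
        · exact hy2
      · exact subset_inter subset_union_right (hB₂s.trans diff_subset)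
    rw [this, hB₂c]; exact_mod_cast hb1
  · rw [Set.encard_union_eq (hd.mono ((hB₁s.trans diff_subset)) ((hB₂s.trans diff_subset))),
      hB₁c, hB₂c]
    exact_mod_cast congrArg (Nat.cast : ℕ → ℕ∞) hsum

def Pind (k : ℕ) (E₁ E₂ I : Set α) : Prop :=
  I ⊆ E₁ ∪ E₂ ∧ (I ∩ E₁).encard ≤ ((k-1:ℕ):ℕ∞) ∧ (I ∩ E₂).encard ≤ ((k-1:ℕ):ℕ∞) ∧
    I.encard ≤ (k:ℕ∞)

lemma pind_finite {k : ℕ} {E₁ E₂ I : Set α} (h : Pind k E₁ E₂ I) : I.Finite :=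
  Set.finite_of_encard_le_coe h.2.2.2

lemma exists_not_mem_of_encard_lt {s t : Set α} (hst : s ⊆ t) (h : s.encard < t.encard) :
    ∃ y ∈ t, y ∉ s := by
  by_contra h'
  push_neg at h'
  exact absurd (subset_antisymm hst h' ▸ h) (lt_irrefl _)

lemma base_char {k : ℕ} (hk : 2 ≤ k) {E₁ E₂ : Set α} (hd : Disjoint E₁ E₂)
    (h₁ : E₁.encard = (k:ℕ∞)) (h₂ : E₂.encard = (k:ℕ∞)) {P : Matroid α}
    (hPi : ∀ I, P.Indep I ↔ Pind k E₁ E₂ I) (B : Set α) :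
    P.IsBase B ↔ Pind k E₁ E₂ B ∧ B.encard = (k:ℕ∞) := by
  rw [Matroid.isBase_iff_maximal_indep]
  constructor
  · rintro ⟨hBi, hmax⟩
    obtain ⟨hBE, hB1, hB2, hBk⟩ := (hPi B).1 hBi
    refine ⟨⟨hBE, hB1, hB2, hBk⟩, ?_⟩
    by_contra hne
    have hBfin : B.Finite := Set.finite_of_encard_le_coe hBk
    have hca : ((B ∩ E₁).ncard : ℕ∞) = (B ∩ E₁).encard :=
      (hBfin.inter_of_left _).cast_ncard_eq
    have hcb : ((B ∩ E₂).ncard : ℕ∞) = (B ∩ E₂).encard :=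
      (hBfin.inter_of_left _).cast_ncard_eq
    have hcB : (B.ncard : ℕ∞) = B.encard := hBfin.cast_ncard_eq
    set a := (B ∩ E₁).ncard
    set b := (B ∩ E₂).ncard
    have hsplit : a + b = B.ncard := by
      rw [← Nat.cast_inj (R := ℕ∞), Nat.cast_add, hca, hcb, hcB, aux_split hd hBE]
    have hBlt : B.ncard < k := by
      rw [← Nat.cast_lt (α := ℕ∞), hcB]
      exact lt_of_le_of_ne hBk (by rw [← hcB] at hBk hne ⊢; exact_mod_cast hne)
    have han : a ≤ k - 1 := by rw [← Nat.cast_le (α := ℕ∞), hca]; exact hB1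
    have hbn : b ≤ k - 1 := by rw [← Nat.cast_le (α := ℕ∞), hcb]; exact hB2
    -- find an element to insert
    have hstep : ∃ y, y ∉ B ∧ Pind k E₁ E₂ (insert y B) := by
      rcases (by omega : a ≤ k - 2 ∨ b ≤ k - 2) with hs | hs
      · obtain ⟨y, hyE, hyB'⟩ := exists_not_mem_of_encard_lt inter_subset_right
          (show (B ∩ E₁).encard < E₁.encard by
            rw [← hca, h₁]; exact_mod_cast (by omega : a < k))
        have hyB : y ∉ B := fun h => hyB' ⟨h, hyE⟩
        refine ⟨y, hyB, insert_subset (subset_union_left hyE) hBE, ?_, ?_, ?_⟩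
        · rw [Set.insert_inter_of_mem hyE]
          calc (insert y (B ∩ E₁)).encard ≤ (B ∩ E₁).encard + 1 := Set.encard_insert_le _ _
          _ ≤ ((k-1:ℕ):ℕ∞) := by rw [← hca]; exact_mod_cast (by omega : a + 1 ≤ k - 1)
        · rw [Set.insert_inter_of_notMem (disjoint_left.1 hd hyE)]; exact hB2
        · calc (insert y B).encard ≤ B.encard + 1 := Set.encard_insert_le _ _
          _ ≤ (k:ℕ∞) := by rw [← hcB]; exact_mod_cast (by omega : B.ncard + 1 ≤ k)
      · obtain ⟨y, hyE, hyB'⟩ := exists_not_mem_of_encard_lt inter_subset_right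
          (show (B ∩ E₂).encard < E₂.encard by
            rw [← hcb, h₂]; exact_mod_cast (by omega : b < k))
        have hyB : y ∉ B := fun h => hyB' ⟨h, hyE⟩
        refine ⟨y, hyB, insert_subset (subset_union_right hyE) hBE, ?_, ?_, ?_⟩
        · rw [Set.insert_inter_of_notMem (disjoint_right.1 hd hyE)]; exact hB1
        · rw [Set.insert_inter_of_mem hyE]
          calc (insert y (B ∩ E₂)).encard ≤ (B ∩ E₂).encard + 1 := Set.encard_insert_le _ _
          _ ≤ ((k-1:ℕ):ℕ∞) := by rw [← hcb]; exact_mod_cast (by omega : b + 1 ≤ k - 1)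
        · calc (insert y B).encard ≤ B.encard + 1 := Set.encard_insert_le _ _
          _ ≤ (k:ℕ∞) := by rw [← hcB]; exact_mod_cast (by omega : B.ncard + 1 ≤ k)
    obtain ⟨y, hyB, hyP⟩ := hstep
    exact hyB (hmax ((hPi _).2 hyP) (subset_insert _ _) (mem_insert _ _))
  · rintro ⟨hPind, hcard⟩
    refine ⟨(hPi B).2 hPind, fun I hI hBI => ?_⟩
    obtain ⟨_, _, _, hIk⟩ := (hPi I).1 hI
    exact ((Set.finite_of_encard_le_coe hIk).eq_of_subset_of_encard_le' hBI
      (by rw [hcard]; exact hIk)).symm.subset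

lemma dual_char {k : ℕ} (hk : 2 ≤ k) {E₁ E₂ : Set α} (hd : Disjoint E₁ E₂)
    (h₁ : E₁.encard = (k:ℕ∞)) (h₂ : E₂.encard = (k:ℕ∞)) {P : Matroid α}
    (hPE : P.E = E₁ ∪ E₂) (hPi : ∀ I, P.Indep I ↔ Pind k E₁ E₂ I) (I : Set α) :
    P✶.Indep I ↔ Pind k E₁ E₂ I := by
  rw [Matroid.dual_indep_iff_exists', hPE]
  constructor
  · rintro ⟨hIE, B, hB, hdisj⟩
    obtain ⟨⟨hBE, hB1, hB2, -⟩, hBk⟩ := (base_char hk hd h₁ h₂ hPi B).1 hB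
    have hBfin : B.Finite := Set.finite_of_encard_le_coe hBk.le
    have hca : ((B ∩ E₁).ncard : ℕ∞) = (B ∩ E₁).encard :=
      (hBfin.inter_of_left _).cast_ncard_eq
    have hcb : ((B ∩ E₂).ncard : ℕ∞) = (B ∩ E₂).encard :=
      (hBfin.inter_of_left _).cast_ncard_eq
    set a := (B ∩ E₁).ncard
    set b := (B ∩ E₂).ncard
    have hsplit : a + b = k := by
      rw [← Nat.cast_inj (R := ℕ∞), Nat.cast_add, hca, hcb, aux_split hd hBE, hBk]
    have han : a ≤ k - 1 := by rw [← Nat.cast_le (α := ℕ∞), hca]; exact hB1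
    have hbn : b ≤ k - 1 := by rw [← Nat.cast_le (α := ℕ∞), hcb]; exact hB2
    have hE1d : (E₁ \ B).encard = ((k - a : ℕ) : ℕ∞) := by
      have he : E₁ \ B = E₁ \ (B ∩ E₁) := by ext y; simp [and_comm]
      rw [he]
      refine cast_eq_of_add_cast (by omega) ?_
      rw [hca, Set.encard_diff_add_encard_of_subset inter_subset_right, h₁]
    have hE2d : (E₂ \ B).encard = ((k - b : ℕ) : ℕ∞) := by
      have he : E₂ \ B = E₂ \ (B ∩ E₂) := by ext y; simp [and_comm]
      rw [he]
      refine cast_eq_of_add_cast (by omega) ?_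
      rw [hcb, Set.encard_diff_add_encard_of_subset inter_subset_right, h₂]
    have hEd : ((E₁ ∪ E₂) \ B).encard = (k:ℕ∞) := by
      have h2k : (E₁ ∪ E₂).encard = ((2*k : ℕ):ℕ∞) := by
        rw [Set.encard_union_eq hd, h₁, h₂]; push_cast; ring
      have := Set.encard_diff_add_encard_of_subset hBE
      rw [hBk, h2k] at this
      rw [cast_eq_of_add_cast (by omega) this]; congr 1; omega
    refine ⟨hIE, ?_, ?_, ?_⟩
    · refine le_trans (Set.encard_le_encard ?_) (le_of_eq_of_le hE1d ?_)
      · rintro y ⟨hyI, hyE⟩; exact ⟨hyE, disjoint_left.1 hdisj hyI⟩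
      · exact_mod_cast (by omega : k - a ≤ k - 1)
    · refine le_trans (Set.encard_le_encard ?_) (le_of_eq_of_le hE2d ?_)
      · rintro y ⟨hyI, hyE⟩; exact ⟨hyE, disjoint_left.1 hdisj hyI⟩
      · exact_mod_cast (by omega : k - b ≤ k - 1)
    · refine le_trans (Set.encard_le_encard ?_) hEd.le
      exact fun y hy => ⟨hIE hy, disjoint_left.1 hdisj hy⟩
  · rintro ⟨hIE, h1, h2, hk'⟩
    refine ⟨hIE, ?_⟩
    obtain ⟨B, hBE, hdisj, hB1, hB2, hBk⟩ :=
      exists_bal hk hd h₁ h₂ h1 h2 (by rw [aux_split hd hIE]; exact hk')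
    exact ⟨B, (base_char hk hd h₁ h₂ hPi B).2 ⟨⟨hBE, hB1, hB2, hBk.le⟩, hBk⟩, hdisj.symm⟩

lemma erank_dual {k : ℕ} (hk : 2 ≤ k) {E₁ E₂ : Set α} (hd : Disjoint E₁ E₂)
    (h₁ : E₁.encard = (k:ℕ∞)) (h₂ : E₂.encard = (k:ℕ∞)) {P : Matroid α}
    (hPE : P.E = E₁ ∪ E₂) (hPi : ∀ I, P.Indep I ↔ Pind k E₁ E₂ I) :
    _root_.eRank (P✶) = (k:ℕ∞) := by
  apply myERank_eq
  · intro I hI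
    exact ((dual_char hk hd h₁ h₂ hPE hPi I).1 hI).2.2.2
  · obtain ⟨B, hBE, -, hB1, hB2, hBk⟩ := exists_bal hk hd h₁ h₂ (I := ∅)
      (by simp) (by simp) (by simp)
    exact ⟨B, (dual_char hk hd h₁ h₂ hPE hPi B).2 ⟨hBE, hB1, hB2, hBk.le⟩, hBk⟩

lemma le_pred_of_add_one_le {k : ℕ} (hk : 1 ≤ k) {x : ℕ∞} (h : x + 1 ≤ (k:ℕ∞)) :
    x ≤ ((k-1:ℕ):ℕ∞) := by
  have h2 : ((k:ℕ):ℕ∞) = ((k-1:ℕ):ℕ∞) + 1 := by norm_cast; omega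
  rw [h2] at h
  exact (ENat.add_le_add_iff_right ENat.one_ne_top).1 h

lemma pind_of_small {k : ℕ} (hk : 1 ≤ k) {E₁ E₂ J : Set α} (hJ : J ⊆ E₁ ∪ E₂)
    (h : J.encard + 1 ≤ (k:ℕ∞)) : Pind k E₁ E₂ J := by
  have hJk : J.encard ≤ ((k-1:ℕ):ℕ∞) := le_pred_of_add_one_le hk h
  exact ⟨hJ, le_trans (Set.encard_le_encard inter_subset_left) hJk,
    le_trans (Set.encard_le_encard inter_subset_left) hJk,
    le_trans hJk (by exact_mod_cast Nat.sub_le k 1)⟩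

section NLevel

variable {k : ℕ} {E₁ E₂ : Set α} {e : α} {N' : Matroid α}

lemma Nd_indep_bound (hNi : ∀ I, N'.Indep I ↔ (e ∉ I ∧ Pind k E₁ E₂ I) ∨
      (e ∈ I ∧ Pind k E₁ E₂ (I \ {e}) ∧ (I \ {e}).encard + 1 ≤ (k:ℕ∞)))
    {I : Set α} (hI : N'.Indep I) : I.encard ≤ (k:ℕ∞) := by
  rcases (hNi I).1 hI with ⟨-, h⟩ | ⟨heI, -, h⟩
  · exact h.2.2.2
  · rw [← Set.encard_diff_singleton_add_one heI]; exact h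

lemma Ndual_base (hk : 2 ≤ k) (hd : Disjoint E₁ E₂)
    (h₁ : E₁.encard = (k:ℕ∞)) (h₂ : E₂.encard = (k:ℕ∞)) (he : e ∉ E₁ ∪ E₂)
    (hNi : ∀ I, N'.Indep I ↔ (e ∉ I ∧ Pind k E₁ E₂ I) ∨
      (e ∈ I ∧ Pind k E₁ E₂ (I \ {e}) ∧ (I \ {e}).encard + 1 ≤ (k:ℕ∞)))
    (B : Set α) : N'.IsBase B ↔ N'.Indep B ∧ B.encard = (k:ℕ∞) := by
  rw [Matroid.isBase_iff_maximal_indep]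
  constructor
  · rintro ⟨hBi, hmax⟩
    refine ⟨hBi, ?_⟩
    by_contra hne
    have hlt : B.encard < (k:ℕ∞) := lt_of_le_of_ne (Nd_indep_bound hNi hBi) hne
    have hBk1 : B.encard + 1 ≤ (k:ℕ∞) := Order.add_one_le_of_lt hlt
    have hstep : ∃ y, y ∉ B ∧ N'.Indep (insert y B) := by
      by_cases heB : e ∈ B
      · obtain ⟨-, hPd, hcd⟩ := ((hNi B).1 hBi).resolve_left (fun h => h.1 heB)
        have hEcard : (E₁ ∪ E₂).encard = ((2*k:ℕ):ℕ∞) := by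
          rw [Set.encard_union_eq hd, h₁, h₂]; push_cast; ring
        obtain ⟨y, hyE, hyB'⟩ := exists_not_mem_of_encard_lt hPd.1 (by
          rw [hEcard]
          calc (B \ {e}).encard ≤ B.encard := Set.encard_le_encard diff_subset
          _ < (k:ℕ∞) := hlt
          _ ≤ ((2*k:ℕ):ℕ∞) := by exact_mod_cast (by omega : k ≤ 2*k))
        have hye : y ≠ e := fun h => he (h ▸ hyE)
        have hyB : y ∉ B := fun h => hyB' ⟨h, hye⟩
        refine ⟨y, hyB, (hNi _).2 (Or.inr ⟨mem_insert_of_mem _ heB, ?_, ?_⟩)⟩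
        · rw [← Set.insert_diff_singleton_comm hye]
          refine pind_of_small (by omega) (insert_subset hyE hPd.1) ?_
          rw [Set.encard_insert_of_notMem hyB', Set.encard_diff_singleton_add_one heB]
          exact hBk1
        · rw [← Set.insert_diff_singleton_comm hye,
            Set.encard_insert_of_notMem hyB', Set.encard_diff_singleton_add_one heB]
          exact hBk1
      · refine ⟨e, heB, (hNi _).2 (Or.inr ⟨mem_insert _ _, ?_, ?_⟩)⟩
        · rw [Set.insert_diff_self_of_notMem heB]
          obtain ⟨-, hPd⟩ := ((hNi B).1 hBi).resolve_right (fun h => heB h.1)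
          exact hPd
        · rw [Set.insert_diff_self_of_notMem heB]; exact hBk1
    obtain ⟨y, hyB, hyI⟩ := hstep
    exact hyB (hmax hyI (subset_insert _ _) (mem_insert _ _))
  · rintro ⟨hBi, hcard⟩
    refine ⟨hBi, fun I hI hBI => ?_⟩
    have hIk : I.encard ≤ (k:ℕ∞) := Nd_indep_bound hNi hI
    exact ((Set.finite_of_encard_le_coe hIk).eq_of_subset_of_encard_le' hBI
      (by rw [hcard]; exact hIk)).symm.subset

end NLevel

section NLevel2

variable {k : ℕ} {E₁ E₂ : Set α} {e : α} {N' : Matroid α}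

lemma Ndd_indep (hk : 2 ≤ k) (hd : Disjoint E₁ E₂)
    (h₁ : E₁.encard = (k:ℕ∞)) (h₂ : E₂.encard = (k:ℕ∞)) (he : e ∉ E₁ ∪ E₂)
    (hNE : N'.E = insert e (E₁ ∪ E₂))
    (hNi : ∀ I, N'.Indep I ↔ (e ∉ I ∧ Pind k E₁ E₂ I) ∨
      (e ∈ I ∧ Pind k E₁ E₂ (I \ {e}) ∧ (I \ {e}).encard + 1 ≤ (k:ℕ∞)))
    (I : Set α) :
    N'✶.Indep I ↔ I ⊆ insert e (E₁ ∪ E₂) ∧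
      ((e ∉ I ∧ I.encard ≤ ((k+1:ℕ):ℕ∞)) ∨
       (e ∈ I ∧ (I ∩ E₁).encard ≤ ((k-1:ℕ):ℕ∞) ∧ (I ∩ E₂).encard ≤ ((k-1:ℕ):ℕ∞) ∧
         (I \ {e}).encard ≤ (k:ℕ∞))) := by
  have hEcard : (E₁ ∪ E₂).encard = ((2*k:ℕ):ℕ∞) := by
    rw [Set.encard_union_eq hd, h₁, h₂]; push_cast; ring
  have hGcard : (insert e (E₁ ∪ E₂)).encard = ((2*k+1:ℕ):ℕ∞) := by
    rw [Set.encard_insert_of_notMem he, hEcard]; push_cast; ring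
  rw [Matroid.dual_indep_iff_exists', hNE]
  constructor
  · rintro ⟨hIE, B, hB, hdisj⟩
    obtain ⟨hBi, hBk⟩ := (Ndual_base hk hd h₁ h₂ he hNi B).1 hB
    have hBE' : B ⊆ insert e (E₁ ∪ E₂) := hNE ▸ hB.subset_ground
    refine ⟨hIE, ?_⟩
    by_cases heI : e ∈ I
    · right
      have heB : e ∉ B := disjoint_left.1 hdisj heI
      obtain ⟨-, hBE, hB1, hB2, -⟩ := ((hNi B).1 hBi).resolve_right (fun h => heB h.1)
      have hBfin : B.Finite := Set.finite_of_encard_le_coe hBk.le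
      have hca : ((B ∩ E₁).ncard : ℕ∞) = (B ∩ E₁).encard :=
        (hBfin.inter_of_left _).cast_ncard_eq
      have hcb : ((B ∩ E₂).ncard : ℕ∞) = (B ∩ E₂).encard :=
        (hBfin.inter_of_left _).cast_ncard_eq
      set a := (B ∩ E₁).ncard
      set b := (B ∩ E₂).ncard
      have hsplit : a + b = k := by
        rw [← Nat.cast_inj (R := ℕ∞), Nat.cast_add, hca, hcb, aux_split hd hBE, hBk]
      have han : a ≤ k - 1 := by rw [← Nat.cast_le (α := ℕ∞), hca]; exact hB1
      have hbn : b ≤ k - 1 := by rw [← Nat.cast_le (α := ℕ∞), hcb]; exact hB2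
      have hE1d : (E₁ \ B).encard = ((k - a : ℕ) : ℕ∞) := by
        have he1 : E₁ \ B = E₁ \ (B ∩ E₁) := by ext y; simp [and_comm]
        rw [he1]
        refine cast_eq_of_add_cast (by omega) ?_
        rw [hca, Set.encard_diff_add_encard_of_subset inter_subset_right, h₁]
      have hE2d : (E₂ \ B).encard = ((k - b : ℕ) : ℕ∞) := by
        have he2 : E₂ \ B = E₂ \ (B ∩ E₂) := by ext y; simp [and_comm]
        rw [he2]
        refine cast_eq_of_add_cast (by omega) ?_
        rw [hcb, Set.encard_diff_add_encard_of_subset inter_subset_right, h₂]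
      have hEd : ((E₁ ∪ E₂) \ B).encard = (k:ℕ∞) := by
        have := Set.encard_diff_add_encard_of_subset hBE
        rw [hBk, hEcard] at this
        rw [cast_eq_of_add_cast (by omega) this]; congr 1; omega
      refine ⟨heI, ?_, ?_, ?_⟩
      · refine le_trans (Set.encard_le_encard ?_) (le_of_eq_of_le hE1d ?_)
        · rintro y ⟨hyI, hyE⟩; exact ⟨hyE, disjoint_left.1 hdisj hyI⟩
        · exact_mod_cast (by omega : k - a ≤ k - 1)
      · refine le_trans (Set.encard_le_encard ?_) (le_of_eq_of_le hE2d ?_)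
        · rintro y ⟨hyI, hyE⟩; exact ⟨hyE, disjoint_left.1 hdisj hyI⟩
        · exact_mod_cast (by omega : k - b ≤ k - 1)
      · refine le_trans (Set.encard_le_encard ?_) hEd.le
        rintro y ⟨hyI, hye⟩
        rcases hIE hyI with h | h
        · exact absurd h hye
        · exact ⟨h, disjoint_left.1 hdisj hyI⟩
    · left
      refine ⟨heI, ?_⟩
      have hdd : (insert e (E₁ ∪ E₂) \ B).encard = ((k+1:ℕ):ℕ∞) := by
        have := Set.encard_diff_add_encard_of_subset hBE'
        rw [hBk, hGcard] at this
        rw [cast_eq_of_add_cast (by omega) this]; congr 1; omega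
      refine le_trans (Set.encard_le_encard ?_) hdd.le
      exact fun y hy => ⟨hIE hy, disjoint_left.1 hdisj hy⟩
  · rintro ⟨hIE, hcase⟩
    refine ⟨hIE, ?_⟩
    rcases hcase with ⟨heI, hIk⟩ | ⟨heI, h1, h2, hIk⟩
    · -- build a basis containing e and avoiding I
      have hJfin : (I ∩ (E₁ ∪ E₂)).Finite :=
        Set.finite_of_encard_le_coe (le_trans (Set.encard_le_encard inter_subset_left) hIk)
      set j := (I ∩ (E₁ ∪ E₂)).ncard with hjdef
      have hcj : ((j:ℕ):ℕ∞) = (I ∩ (E₁ ∪ E₂)).encard := hJfin.cast_ncard_eq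
      have hjk : j ≤ k + 1 := by
        rw [← Nat.cast_le (α := ℕ∞), hcj]
        exact le_trans (Set.encard_le_encard inter_subset_left) hIk
      have hdiffc : ((E₁ ∪ E₂) \ I).encard = ((2*k - j : ℕ):ℕ∞) := by
        have he1 : (E₁ ∪ E₂) \ I = (E₁ ∪ E₂) \ (I ∩ (E₁ ∪ E₂)) := by
          ext y; simp [and_comm]
        rw [he1]
        refine cast_eq_of_add_cast (by omega) ?_
        rw [hcj, Set.encard_diff_add_encard_of_subset inter_subset_right, hEcard]
      obtain ⟨B', hB's, hB'c⟩ := Set.exists_subset_encard_eq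
        (show ((k-1:ℕ):ℕ∞) ≤ ((E₁ ∪ E₂) \ I).encard by
          rw [hdiffc]; exact_mod_cast (by omega : k - 1 ≤ 2*k - j))
      have hB'E : B' ⊆ E₁ ∪ E₂ := hB's.trans diff_subset
      have heB' : e ∉ B' := fun h => he (hB'E h)
      have hBcard : (insert e B').encard = (k:ℕ∞) := by
        rw [Set.encard_insert_of_notMem heB', hB'c]
        norm_cast; omega
      refine ⟨insert e B', (Ndual_base hk hd h₁ h₂ he hNi _).2 ⟨?_, hBcard⟩, ?_⟩
      · refine (hNi _).2 (Or.inr ⟨mem_insert _ _, ?_, ?_⟩)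
        · rw [Set.insert_diff_self_of_notMem heB']
          refine pind_of_small (by omega) hB'E ?_
          rw [hB'c]; norm_cast; omega
        · rw [Set.insert_diff_self_of_notMem heB', hB'c]; norm_cast; omega
      · rw [Set.disjoint_right]
        rintro y (rfl | hyB') hyI
        · exact heI hyI
        · exact (hB's hyB').2 hyI
    · have hIdE : I \ {e} ⊆ E₁ ∪ E₂ := by
        rintro y ⟨hyI, hye⟩
        rcases hIE hyI with h | h
        · exact absurd h hye
        · exact h
      have hi1 : I ∩ E₁ = (I \ {e}) ∩ E₁ := by
        ext y; simp only [mem_inter_iff, mem_diff, mem_singleton_iff]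
        exact ⟨fun ⟨h1', h2'⟩ => ⟨⟨h1', fun hh => he (hh ▸ Or.inl h2')⟩, h2'⟩,
          fun ⟨⟨h1', _⟩, h2'⟩ => ⟨h1', h2'⟩⟩
      have hi2 : I ∩ E₂ = (I \ {e}) ∩ E₂ := by
        ext y; simp only [mem_inter_iff, mem_diff, mem_singleton_iff]
        exact ⟨fun ⟨h1', h2'⟩ => ⟨⟨h1', fun hh => he (hh ▸ Or.inr h2')⟩, h2'⟩,
          fun ⟨⟨h1', _⟩, h2'⟩ => ⟨h1', h2'⟩⟩
      obtain ⟨B, hBE, hdisj, hB1, hB2, hBk⟩ := exists_bal hk hd h₁ h₂ h1 h2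
        (by rw [hi1, hi2, aux_split hd hIdE]; exact hIk)
      refine ⟨B, (Ndual_base hk hd h₁ h₂ he hNi B).2 ⟨?_, hBk⟩, hdisj.symm⟩
      exact (hNi B).2 (Or.inl ⟨fun h => he (hBE h), hBE, hB1, hB2, hBk.le⟩)

end NLevel2

/-- For every `n ≥ 4`, the matroid `A_n` has exactly two distinct `n`-element circuits,
these two circuits intersect in exactly one element `f`, and the deletion `A_n \ f` is
isomorphic to the uniform matroid `U_{n, 2n-1}`. -/
theorem isA_two_circuits (n : ℕ) (hn : 4 ≤ n) (M : Matroid α) (hM : IsA n M) :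
    ∃ C₁ C₂ : Set α, C₁ ≠ C₂ ∧
      _root_.IsCircuit M C₁ ∧ C₁.encard = (n : ℕ∞) ∧ _root_.IsCircuit M C₂ ∧ C₂.encard = (n : ℕ∞) ∧
      (∀ C : Set α, _root_.IsCircuit M C → C.encard = (n : ℕ∞) → C = C₁ ∨ C = C₂) ∧
      ∃ f : α, C₁ ∩ C₂ = {f} ∧ IsUnifIso n (2 * n - 1) (MDel M {f}) := by
  obtain ⟨N, x, ⟨P, e, hP, hco⟩, hext⟩ := hM
  obtain ⟨M₁, M₂, M₀, hU1, hU2, hds, htr⟩ := hP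
  obtain ⟨hE₁c, hI1⟩ := hU1
  obtain ⟨hE₂c, hI2⟩ := hU2
  obtain ⟨hdisj, hM₀E, hM₀i⟩ := hds
  obtain ⟨-, hPE, hPi0⟩ := htr
  set E₁ := M₁.E with hE₁def
  set E₂ := M₂.E with hE₂def
  rw [hM₀E] at hPE
  have hk2 : 2 ≤ n - 1 := by omega
  -- step 1 : characterization of P
  have hPchar : ∀ I, P.Indep I ↔ Pind (n-1) E₁ E₂ I := by
    intro I
    rw [hPi0 I, hM₀i (I := I), hM₀E, hI1, hI2]
    exact ⟨fun ⟨⟨hs, ⟨_, h1⟩, ⟨_, h2⟩⟩, h3⟩ => ⟨hs, h1, h2, h3⟩,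
      fun ⟨hs, h1, h2, h3⟩ => ⟨⟨hs, ⟨inter_subset_right, h1⟩, ⟨inter_subset_right, h2⟩⟩, h3⟩⟩
  -- step 2 : free coextension data
  obtain ⟨heP, hN'E, hN'i⟩ := hco
  rw [Matroid.dual_ground, hPE] at heP
  rw [Matroid.dual_ground (M := P), hPE] at hN'E
  have hNi : ∀ I, N✶.Indep I ↔ (e ∉ I ∧ Pind (n-1) E₁ E₂ I) ∨
      (e ∈ I ∧ Pind (n-1) E₁ E₂ (I \ {e}) ∧ (I \ {e}).encard + 1 ≤ ((n-1:ℕ):ℕ∞)) := by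
    intro I
    rw [hN'i I, dual_char hk2 hdisj hE₁c hE₂c hPE hPchar I,
      dual_char hk2 hdisj hE₁c hE₂c hPE hPchar (I \ {e}),
      erank_dual hk2 hdisj hE₁c hE₂c hPE hPchar]
  rw [Matroid.dual_ground] at hN'E
  -- hN'E : N.E = insert e (E₁ ∪ E₂)
  have hNind : ∀ I, N.Indep I ↔ I ⊆ insert e (E₁ ∪ E₂) ∧
      ((e ∉ I ∧ I.encard ≤ ((n-1+1:ℕ):ℕ∞)) ∨
       (e ∈ I ∧ (I ∩ E₁).encard ≤ ((n-1-1:ℕ):ℕ∞) ∧ (I ∩ E₂).encard ≤ ((n-1-1:ℕ):ℕ∞) ∧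
         (I \ {e}).encard ≤ ((n-1:ℕ):ℕ∞))) := by
    intro I
    have h := Ndd_indep hk2 hdisj hE₁c hE₂c heP
      (by rw [Matroid.dual_ground]; exact hN'E) hNi I
    rwa [Matroid.dual_dual] at h
  -- step 3 : rank of N
  have hcast1 : ((n-1+1:ℕ):ℕ∞) = (n:ℕ∞) := by norm_cast; omega
  have hrankN : _root_.eRank N = (n:ℕ∞) := by
    apply myERank_eq
    · intro I hI
      rcases ((hNind I).1 hI).2 with ⟨-, h⟩ | ⟨heI, -, -, h⟩
      · rwa [hcast1] at h
      · rw [← Set.encard_diff_singleton_add_one heI]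
        calc (I \ {e}).encard + 1 ≤ ((n-1:ℕ):ℕ∞) + 1 := add_le_add_left h 1
        _ = (n:ℕ∞) := by norm_cast; omega
    · have hEcard : (E₁ ∪ E₂).encard = ((2*(n-1):ℕ):ℕ∞) := by
        rw [Set.encard_union_eq hdisj, hE₁c, hE₂c]; push_cast; ring
      obtain ⟨I, hIs, hIc⟩ := Set.exists_subset_encard_eq
        (show ((n:ℕ):ℕ∞) ≤ (E₁ ∪ E₂).encard by
          rw [hEcard]; exact_mod_cast (by omega : n ≤ 2*(n-1)))
      refine ⟨I, (hNind I).2 ⟨hIs.trans (subset_insert _ _),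
        Or.inl ⟨fun h => heP (hIs h), ?_⟩⟩, hIc⟩
      rw [hIc, hcast1]
  -- step 4 : characterization of M
  obtain ⟨hxN, hME, hMi⟩ := hext
  rw [hN'E] at hxN hME
  have hxe : x ≠ e := fun h => hxN (h ▸ mem_insert _ _)
  have hxE : x ∉ E₁ ∪ E₂ := fun h => hxN (mem_insert_of_mem _ h)
  have heE₁ : e ∉ E₁ := fun h => heP (Or.inl h)
  have heE₂ : e ∉ E₂ := fun h => heP (Or.inr h)
  have hMchar : ∀ I, M.Indep I ↔ I ⊆ M.E ∧ I.encard ≤ (n:ℕ∞) ∧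
      (e ∈ I → x ∉ I → (I ∩ E₁).encard ≤ ((n-1-1:ℕ):ℕ∞) ∧
        (I ∩ E₂).encard ≤ ((n-1-1:ℕ):ℕ∞)) := by
    intro I
    rw [hMi I, hrankN, hNind I]
    by_cases hxI : x ∈ I
    · simp only [hxI, not_true_eq_false, false_and, false_or, true_and,
        not_false_eq_true, forall_true_left]
      rw [hNind (I \ {x})]
      have hdx : (I \ {x}).encard + 1 = I.encard := Set.encard_diff_singleton_add_one hxI
      have hsub : I ⊆ M.E ↔ I \ {x} ⊆ insert e (E₁ ∪ E₂) := by
        rw [hME]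
        constructor
        · rintro h y ⟨hyI, hyx⟩
          rcases h hyI with h' | h'
          · exact absurd h' hyx
          · exact h'
        · intro h y hyI
          by_cases hy : y = x
          · exact hy ▸ mem_insert _ _
          · exact mem_insert_of_mem _ (h ⟨hyI, hy⟩)
      have hex : e ∈ I \ {x} ↔ e ∈ I := by
        simp [Ne.symm hxe]
      constructor
      · rintro ⟨⟨hs, hcases⟩, hle⟩
        exact ⟨hsub.2 hs, by rw [← hdx]; exact hle, fun _ h' => h'.elim⟩
      · rintro ⟨hs, hle, -⟩
        have hle' : (I \ {x}).encard + 1 ≤ (n:ℕ∞) := by rw [hdx]; exact hle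
        refine ⟨⟨hsub.1 hs, ?_⟩, hle'⟩
        by_cases heI : e ∈ I
        · refine Or.inr ⟨hex.2 heI, ?_, ?_, ?_⟩
          · refine le_trans (Set.encard_le_encard (show (I\{x}) ∩ E₁ ⊆ (I\{x}) \ {e} from ?_))
              (le_pred_of_add_one_le (by omega) ?_)
            · rintro y ⟨hyI, hyE⟩
              exact ⟨hyI, fun hh => heE₁ (hh ▸ hyE)⟩
            · rw [Set.encard_diff_singleton_add_one (hex.2 heI)]
              exact le_pred_of_add_one_le (by omega) hle'
          · refine le_trans (Set.encard_le_encard (show (I\{x}) ∩ E₂ ⊆ (I\{x}) \ {e} from ?_))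
              (le_pred_of_add_one_le (by omega) ?_)
            · rintro y ⟨hyI, hyE⟩
              exact ⟨hyI, fun hh => heE₂ (hh ▸ hyE)⟩
            · rw [Set.encard_diff_singleton_add_one (hex.2 heI)]
              exact le_pred_of_add_one_le (by omega) hle'
          · exact le_trans (Set.encard_le_encard diff_subset)
              (le_pred_of_add_one_le (by omega) hle')
        · exact Or.inl ⟨fun h => heI (hex.1 h), by
            rw [hcast1]; exact le_trans le_self_add hle'⟩
    · simp only [hxI, not_false_eq_true, true_and, false_and, and_false, or_false,
        forall_true_left]
      have hsub : I ⊆ M.E ↔ I ⊆ insert e (E₁ ∪ E₂) := by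
        rw [hME]
        constructor
        · intro h y hyI
          rcases h hyI with h' | h'
          · exact absurd (h' ▸ hyI) hxI
          · exact h'
        · exact fun h => h.trans (subset_insert _ _)
      by_cases heI : e ∈ I
      · have hde : (I \ {e}).encard + 1 = I.encard := Set.encard_diff_singleton_add_one heI
        constructor
        · rintro ⟨hs, hcases⟩
          rcases hcases with ⟨heI', -⟩ | ⟨-, h1, h2, h3⟩
          · exact absurd heI heI'
          · refine ⟨hsub.2 hs, ?_, fun _ => ⟨h1, h2⟩⟩
            rw [← hde]
            calc (I \ {e}).encard + 1 ≤ ((n-1:ℕ):ℕ∞) + 1 := add_le_add_left h3 1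
            _ = (n:ℕ∞) := by norm_cast; omega
        · rintro ⟨hs, hle, himp⟩
          obtain ⟨h1, h2⟩ := himp heI
          refine ⟨hsub.1 hs, Or.inr ⟨heI, h1, h2, ?_⟩⟩
          exact le_pred_of_add_one_le (by omega) (by rw [hde]; exact hle)
      · constructor
        · rintro ⟨hs, hcases⟩
          rcases hcases with ⟨-, h1⟩ | ⟨heI', -⟩
          · exact ⟨hsub.2 hs, by rwa [hcast1] at h1, fun h => absurd h heI⟩
          · exact absurd heI' heI
        · rintro ⟨hs, hle, -⟩
          exact ⟨hsub.1 hs, Or.inl ⟨heI, by rwa [hcast1]⟩⟩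
  -- ground set facts
  have hE₁fin : E₁.Finite := Set.finite_of_encard_le_coe hE₁c.le
  have hE₂fin : E₂.Finite := Set.finite_of_encard_le_coe hE₂c.le
  have hC₁c : (insert e E₁).encard = (n:ℕ∞) := by
    rw [Set.encard_insert_of_notMem heE₁, hE₁c]; norm_cast; omega
  have hC₂c : (insert e E₂).encard = (n:ℕ∞) := by
    rw [Set.encard_insert_of_notMem heE₂, hE₂c]; norm_cast; omega
  have hC₁E : insert e E₁ ⊆ M.E := by
    rw [hME]
    exact insert_subset (mem_insert_of_mem _ (mem_insert _ _))
      (fun y hy => mem_insert_of_mem _ (mem_insert_of_mem _ (Or.inl hy)))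
  have hC₂E : insert e E₂ ⊆ M.E := by
    rw [hME]
    exact insert_subset (mem_insert_of_mem _ (mem_insert _ _))
      (fun y hy => mem_insert_of_mem _ (mem_insert_of_mem _ (Or.inr hy)))
  have hnn : ¬ ((n-1:ℕ):ℕ∞) ≤ ((n-1-1:ℕ):ℕ∞) := by
    rw [Nat.cast_le]; omega
  -- circuits
  have hcirc : ∀ (F : Set α), F = E₁ ∨ F = E₂ → _root_.IsCircuit M (insert e F) := by
    rintro F hF
    have hFE : insert e F ⊆ M.E := by rcases hF with rfl | rfl; exacts [hC₁E, hC₂E]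
    have hFc : (insert e F).encard = (n:ℕ∞) := by rcases hF with rfl | rfl; exacts [hC₁c, hC₂c]
    have heF : e ∉ F := by rcases hF with rfl | rfl; exacts [heE₁, heE₂]
    have hxF : x ∉ insert e F := by
      rcases hF with rfl | rfl
      · rintro (rfl | h); exacts [hxe rfl, hxE (Or.inl h)]
      · rintro (rfl | h); exacts [hxe rfl, hxE (Or.inr h)]
    constructor
    · refine ⟨fun h => ?_, hFE⟩
      obtain ⟨-, -, himp⟩ := (hMchar _).1 h
      obtain ⟨h1, h2⟩ := himp (mem_insert _ _) hxF
      rcases hF with rfl | rfl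
      · rw [Set.insert_inter_of_notMem heE₁, inter_self, hE₁c] at h1
        exact hnn h1
      · rw [Set.insert_inter_of_notMem heE₂, inter_self, hE₂c] at h2
        exact hnn h2
    · intro D hD
      have hDfin : (insert e F).Finite := Set.finite_of_encard_le_coe hFc.le
      have hDlt : D.encard < (n:ℕ∞) := hFc ▸ (hDfin.subset hD.subset).encard_lt_encard hD
      refine (hMchar D).2 ⟨hD.subset.trans hFE, hDlt.le, fun heD hxD => ?_⟩
      have hDe1 : (D \ {e}).encard + 1 < (n:ℕ∞) := by
        rwa [Set.encard_diff_singleton_add_one heD]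
      have hbound : (D \ {e}).encard ≤ ((n-1-1:ℕ):ℕ∞) := by
        refine le_pred_of_add_one_le (by omega) ?_
        refine le_pred_of_add_one_le (by omega) ?_
        calc (D \ {e}).encard + 1 + 1 ≤ (n:ℕ∞) := by
              refine Order.add_one_le_of_lt hDe1
        _ = ((n:ℕ):ℕ∞) := rfl
      constructor
      · refine le_trans (Set.encard_le_encard ?_) hbound
        rintro y ⟨hyD, hyE⟩
        exact ⟨hyD, fun hh => heE₁ (hh ▸ hyE)⟩
      · refine le_trans (Set.encard_le_encard ?_) hbound
        rintro y ⟨hyD, hyE⟩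
        exact ⟨hyD, fun hh => heE₂ (hh ▸ hyE)⟩
  refine ⟨insert e E₁, insert e E₂, ?_, hcirc _ (Or.inl rfl), hC₁c, hcirc _ (Or.inr rfl),
    hC₂c, ?_, e, ?_, ?_, ?_⟩
  · -- C₁ ≠ C₂
    obtain ⟨y, hy⟩ := Set.nonempty_of_encard_ne_zero (s := E₁)
      (by rw [hE₁c]; exact_mod_cast (by omega : (n-1:ℕ) ≠ 0))
    intro h
    have : y ∈ insert e E₂ := h ▸ mem_insert_of_mem _ hy
    rcases this with rfl | h'
    · exact heE₁ hy
    · exact (disjoint_left.1 hdisj hy) h'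
  · -- uniqueness
    intro C hC hCn
    obtain ⟨hnind, hCE⟩ := hC.1
    have hCfin : C.Finite := Set.finite_of_encard_le_coe hCn.le
    have himp : ¬ (e ∈ C → x ∉ C → (C ∩ E₁).encard ≤ ((n-1-1:ℕ):ℕ∞) ∧
        (C ∩ E₂).encard ≤ ((n-1-1:ℕ):ℕ∞)) :=
      fun h => hnind ((hMchar C).2 ⟨hCE, hCn.le, h⟩)
    push_neg at himp
    obtain ⟨heC, hxC, hparts⟩ := himp
    by_cases h1 : (C ∩ E₁).encard ≤ ((n-1-1:ℕ):ℕ∞)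
    · right
      have h2 : ¬ (C ∩ E₂).encard ≤ ((n-1-1:ℕ):ℕ∞) := not_le.2 (hparts h1)
      have hge : ((n-1:ℕ):ℕ∞) ≤ (C ∩ E₂).encard := by
        have := Order.add_one_le_of_lt (lt_of_not_ge h2)
        calc ((n-1:ℕ):ℕ∞) = ((n-1-1:ℕ):ℕ∞) + 1 := by norm_cast; omega
        _ ≤ (C ∩ E₂).encard := this
      have heq : C ∩ E₂ = E₂ :=
        hE₂fin.eq_of_subset_of_encard_le' inter_subset_right (hE₂c ▸ hge)
      have hsub : insert e E₂ ⊆ C :=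
        insert_subset heC (heq ▸ inter_subset_left)
      exact (hCfin.eq_of_subset_of_encard_le' hsub (by rw [hCn, hC₂c])).symm
    · left
      have hge : ((n-1:ℕ):ℕ∞) ≤ (C ∩ E₁).encard := by
        have := Order.add_one_le_of_lt (lt_of_not_ge h1)
        calc ((n-1:ℕ):ℕ∞) = ((n-1-1:ℕ):ℕ∞) + 1 := by norm_cast; omega
        _ ≤ (C ∩ E₁).encard := this
      have heq : C ∩ E₁ = E₁ :=
        hE₁fin.eq_of_subset_of_encard_le' inter_subset_right (hE₁c ▸ hge)
      have hsub : insert e E₁ ⊆ C :=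
        insert_subset heC (heq ▸ inter_subset_left)
      exact (hCfin.eq_of_subset_of_encard_le' hsub (by rw [hCn, hC₁c])).symm
  · -- intersection
    ext y
    simp only [mem_inter_iff, mem_insert_iff, mem_singleton_iff]
    constructor
    · rintro ⟨rfl | h1, h2⟩
      · rfl
      · rcases h2 with rfl | h2
        · rfl
        · exact absurd h2 (disjoint_left.1 hdisj h1)
    · rintro rfl
      exact ⟨Or.inl rfl, Or.inl rfl⟩
  · -- ground set size of deletion
    simp only [MDel]
    rw [Matroid.restrict_ground_eq]
    have hdel : M.E \ {e} = insert x (E₁ ∪ E₂) := by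
      rw [hME]
      ext y
      simp only [mem_diff, mem_insert_iff, mem_singleton_iff]
      constructor
      · rintro ⟨rfl | (rfl | h), hne⟩
        · exact Or.inl rfl
        · exact absurd rfl hne
        · exact Or.inr h
      · rintro (rfl | h)
        · exact ⟨Or.inl rfl, hxe⟩
        · exact ⟨Or.inr (Or.inr h), fun hh => heP (hh ▸ h)⟩
    rw [hdel, Set.encard_insert_of_notMem hxE, Set.encard_union_eq hdisj, hE₁c, hE₂c]
    norm_cast; omega
  · -- independence in deletion
    intro I
    simp only [MDel]
    rw [Matroid.restrict_indep_iff, Matroid.restrict_ground_eq]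
    constructor
    · rintro ⟨hI, hIs⟩
      exact ⟨hIs, ((hMchar I).1 hI).2.1⟩
    · rintro ⟨hIs, hIc⟩
      refine ⟨(hMchar I).2 ⟨hIs.trans diff_subset, hIc, fun heI _ => ?_⟩, hIs⟩
      exact absurd heI (fun h => (hIs h).2 rfl)
end
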